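/- arXiv:1912.09873 — 3 statements merged into one kernel-verified Lean document; each statement's English description precedes it below -/
import Mathlib

section
/- Let π ∈ S_NC⁻(2p,2q) (an even, parity-reversing non-crossing annular permutation). If γ_{2p,2q}π⁻¹ separates the points of O = {1,3,…,2p+2q−1}, then for every k, γ_{2p,2q}π⁻¹(2k−1) = 2k−1; equivalently, π(2k) = γ_{2p,2q}(2k) for all k. -/
open Equiv Finset
open scoped Classical

noncomputable section

def numCycles {n : ℕ} (π : Equiv.Perm (Fin n)) : ℕ :=
  π.cycleType.card + (univ.filter fun x => π x = x).card

def plen {n : ℕ} (π : Equiv.Perm (Fin n)) : ℕ := n - numCycles π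

def gammaPQ (p q : ℕ) : Equiv.Perm (Fin (p + q)) :=
  finSumFinEquiv.permCongr (Equiv.sumCongr (finRotate p) (finRotate q))

def cycleLen {n : ℕ} (π : Equiv.Perm (Fin n)) (k : Fin n) : ℕ :=
  (univ.filter fun m => π.SameCycle k m).card

def Separates {n : ℕ} (σ : Equiv.Perm (Fin n)) (A : Finset (Fin n)) : Prop :=
  ∀ a ∈ A, ∀ b ∈ A, σ.SameCycle a b → a = b

def oddSet (n : ℕ) : Finset (Fin n) := univ.filter fun i => Odd (i.val + 1)

def IsSNC (p q : ℕ) (π : Equiv.Perm (Fin (p + q))) : Prop :=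
  (∃ i j, π.SameCycle i j ∧ ¬ (gammaPQ p q).SameCycle i j) ∧
    numCycles π + numCycles (gammaPQ p q * π⁻¹) = p + q

def SameParity {n : ℕ} (a b : Fin n) : Prop := (Odd (a.val + 1) ↔ Odd (b.val + 1))

def EvenCycles {n : ℕ} (π : Equiv.Perm (Fin n)) : Prop := ∀ k, Even (cycleLen π k)

def ParityReversing {n : ℕ} (π : Equiv.Perm (Fin n)) : Prop := ∀ k, ¬ SameParity k (π k)

def SNCminus (p q : ℕ) (π : Equiv.Perm (Fin (p + q))) : Prop :=
  IsSNC p q π ∧ EvenCycles π ∧ ParityReversing π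

end

lemma finRotate_val' {n : ℕ} (i : Fin n) : (finRotate n i).val = (i.val + 1) % n := by
  cases n with
  | zero => exact i.elim0
  | succ m =>
    rw [finRotate_succ_apply, Fin.val_add, Fin.val_one']
    conv_rhs => rw [Nat.add_mod, Nat.mod_eq_of_lt i.isLt]

lemma gamma_val' (p q : ℕ) (k : Fin (p+q)) :
    ((gammaPQ p q) k).val = if k.val < p then (k.val+1) % p else p + (k.val - p + 1) % q := by
  unfold gammaPQ
  rw [Equiv.permCongr_apply]
  refine Fin.addCases (fun i => ?_) (fun j => ?_) k
  · simp [-finRotate_apply, finRotate_val', i.isLt]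
  · simp [-finRotate_apply, finRotate_val']

lemma gamma_parity' (p q : ℕ) (k : Fin (2*p + 2*q)) :
    (((gammaPQ (2*p) (2*q)) k).val + k.val) % 2 = 1 := by
  rw [gamma_val']
  have h1 : (k.val+1) % (2*p) % 2 = (k.val+1) % 2 := Nat.mod_mod_of_dvd _ ⟨p, by ring⟩
  have h2 : (k.val - 2*p + 1) % (2*q) % 2 = (k.val - 2*p + 1) % 2 :=
    Nat.mod_mod_of_dvd _ ⟨q, by ring⟩
  split
  · omega
  · omega


theorem stmt7 {p q : ℕ} (π : Equiv.Perm (Fin (2*p + 2*q)))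
    (hπ : SNCminus (2*p) (2*q) π)
    (hsep : Separates (gammaPQ (2*p) (2*q) * π⁻¹) (oddSet (2*p + 2*q))) :
    (∀ k : Fin (2*p + 2*q), Odd (k.val + 1) → (gammaPQ (2*p) (2*q) * π⁻¹) k = k) ∧
    (∀ k : Fin (2*p + 2*q), Even (k.val + 1) → π k = gammaPQ (2*p) (2*q) k) := by
  have hpr : ∀ k, ¬ ((Odd (k.val + 1)) ↔ Odd ((π k).val + 1)) := hπ.2.2
  have hsep' : ∀ a ∈ (univ.filter fun i : Fin (2*p+2*q) => Odd (i.val+1)),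
      ∀ b ∈ (univ.filter fun i : Fin (2*p+2*q) => Odd (i.val+1)),
      (gammaPQ (2*p) (2*q) * π⁻¹).SameCycle a b → a = b := hsep
  set σ := gammaPQ (2*p) (2*q) * π⁻¹ with hσ
  have hpr' : ∀ k, ¬ ((Odd (k.val + 1)) ↔ Odd ((π⁻¹ k).val + 1)) := by
    intro k h
    have := hpr (π⁻¹ k)
    simp only [show π (π⁻¹ k) = k from Equiv.apply_symm_apply π k] at this
    exact this (Iff.symm h)
  have hσpar : ∀ k : Fin (2*p+2*q), Odd ((σ k).val + 1) ↔ Odd (k.val + 1) := by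
    intro k
    have h1 := hpr' k
    have h2 := gamma_parity' p q (π⁻¹ k)
    simp only [Nat.odd_iff] at *
    have : σ k = gammaPQ (2*p) (2*q) (π⁻¹ k) := rfl
    rw [this]
    omega
  have part1 : ∀ k : Fin (2*p + 2*q), Odd (k.val + 1) → σ k = k := by
    intro k hk
    have hmem : k ∈ (univ.filter fun i : Fin (2*p+2*q) => Odd (i.val+1)) := by
      simp [hk]
    have hmem2 : σ k ∈ (univ.filter fun i : Fin (2*p+2*q) => Odd (i.val+1)) := by
      simp [(hσpar k).mpr hk]
    exact (hsep' k hmem (σ k) hmem2 ⟨1, by simp⟩).symm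
  refine ⟨part1, fun k hk => ?_⟩
  have hodd : Odd ((π k).val + 1) := by
    have := hpr k
    simp only [Nat.even_add_one, Nat.not_even_iff_odd] at hk
    rw [Nat.odd_iff] at hk ⊢
    rw [Nat.odd_iff, Nat.odd_iff] at this
    omega
  have := part1 (π k) hodd
  rw [hσ] at this
  exact (by simpa using this : (gammaPQ (2*p) (2*q)) k = π k).symm
end

section
/- Let π ∈ S_NC(p,q) have all through cycles (every cycle of π meets both cycles of γ_{p,q}). Then every cycle of γ_{p,q}π⁻¹ is either a singleton or a pair, and every pair is a through cycle of γ_{p,q}π⁻¹. Moreover, if in addition π is parity preserving (p,q even and whenever k, π(k) are in different cycles of γ they share parity, otherwise opposite parity), then γ_{p,q}π⁻¹ separates the points of the odd numbers O. -/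
open Equiv Finset
open scoped Classical

open Equiv Finset
open scoped Classical

section Infra
variable {n : ℕ}

/-- the set of minimal representatives of classes of a relation -/
noncomputable def reps (r : Fin n → Fin n → Prop) : Finset (Fin n) :=
  univ.filter fun a => ∀ b, r a b → a ≤ b

def mergeRel (r : Fin n → Fin n → Prop) (x y : Fin n) (a b : Fin n) : Prop :=
  r a b ∨ (r a x ∧ r y b) ∨ (r a y ∧ r x b)

lemma mem_reps {r : Fin n → Fin n → Prop} {a : Fin n} :
    a ∈ reps r ↔ ∀ b, r a b → a ≤ b := by simp [reps]

lemma reps_congr {r s : Fin n → Fin n → Prop} (h : ∀ a b, r a b ↔ s a b) :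
    reps r = reps s := by
  have : r = s := funext fun a => funext fun b => propext (h a b)
  rw [this]

lemma reps_eq_of_rel {r : Fin n → Fin n → Prop} {a b : Fin n}
    (ha : a ∈ reps r) (hb : b ∈ reps r) (hsymm : ∀ x y, r x y → r y x) (hab : r a b) : a = b :=
  le_antisymm ((mem_reps.1 ha) b hab) ((mem_reps.1 hb) a (hsymm _ _ hab))

noncomputable def minClass (r : Fin n → Fin n → Prop) (hr : Equivalence r) (x : Fin n) : Fin n :=
  (univ.filter (r x)).min' ⟨x, by simp [hr.refl x]⟩

lemma minClass_rel {r : Fin n → Fin n → Prop} (hr : Equivalence r) (x : Fin n) :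
    r x (minClass r hr x) := by
  have := Finset.min'_mem (univ.filter (r x)) ⟨x, by simp [hr.refl x]⟩
  simpa [minClass] using this

lemma minClass_mem_reps {r : Fin n → Fin n → Prop} (hr : Equivalence r) (x : Fin n) :
    minClass r hr x ∈ reps r := by
  rw [mem_reps]
  intro b hb
  have hxb : r x b := hr.trans (minClass_rel hr x) hb
  exact Finset.min'_le _ _ (by simp [hxb])

lemma merge_aux {r : Fin n → Fin n → Prop} (hr : Equivalence r) {x y : Fin n}
    (hlt : minClass r hr y < minClass r hr x) :
    reps (mergeRel r x y) = (reps r).erase (minClass r hr x) := by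
  have hru : r x (minClass r hr x) := minClass_rel hr x
  have hrv : r y (minClass r hr y) := minClass_rel hr y
  have hur : minClass r hr x ∈ reps r := minClass_mem_reps hr x
  have hvr : minClass r hr y ∈ reps r := minClass_mem_reps hr y
  ext a
  simp only [Finset.mem_erase]
  constructor
  · intro ha
    have har : a ∈ reps r := by
      rw [mem_reps] at ha ⊢
      exact fun b hb => ha b (Or.inl hb)
    refine ⟨?_, har⟩
    intro h
    have hm : mergeRel r x y a (minClass r hr y) :=
      Or.inr (Or.inl ⟨h ▸ hr.symm hru, hrv⟩)
    have := (mem_reps.1 ha) _ hm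
    rw [h] at this
    exact absurd this (not_le.2 hlt)
  · rintro ⟨hau, har⟩
    rw [mem_reps]
    rintro b (hb | ⟨hax, hyb⟩ | ⟨hay, hxb⟩)
    · exact (mem_reps.1 har) b hb
    · exact absurd (reps_eq_of_rel har hur (fun _ _ => hr.symm) (hr.trans hax hru)) hau
    · have hav : a = minClass r hr y :=
        reps_eq_of_rel har hvr (fun _ _ => hr.symm) (hr.trans hay hrv)
      have hub : minClass r hr x ≤ b := (mem_reps.1 hur) b (hr.trans (hr.symm hru) hxb)
      exact hav ▸ (hlt.le.trans hub)

lemma mergeRel_comm {r : Fin n → Fin n → Prop} (x y a b : Fin n) :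
    mergeRel r x y a b ↔ mergeRel r y x a b := by unfold mergeRel; tauto

lemma merge_count {r : Fin n → Fin n → Prop} (hr : Equivalence r) {x y : Fin n}
    (hxy : ¬ r x y) : (reps (mergeRel r x y)).card + 1 = (reps r).card := by
  have hne : minClass r hr x ≠ minClass r hr y := by
    intro h
    exact hxy (hr.trans (minClass_rel hr x) (hr.symm (h ▸ minClass_rel hr y)))
  have hcard : ∀ w : Fin n, w ∈ reps r →
      ((reps r).erase w).card + 1 = (reps r).card := by
    intro w hw
    rw [Finset.card_erase_of_mem hw]
    have : 0 < (reps r).card := Finset.card_pos.2 ⟨w, hw⟩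
    omega
  rcases lt_or_gt_of_ne hne with h | h
  · rw [reps_congr (fun a b => mergeRel_comm x y a b), merge_aux hr h]
    exact hcard _ (minClass_mem_reps hr y)
  · rw [merge_aux hr h]
    exact hcard _ (minClass_mem_reps hr x)

lemma reps_card_le (r : Fin n → Fin n → Prop) : (reps r).card ≤ n := by
  simpa using Finset.card_le_univ (reps r)

end Infra

section NumCycles
open Equiv.Perm
variable {n : ℕ}

lemma sameCycle_of_nat_pow {σ : Equiv.Perm (Fin n)} {a : Fin n} (i : ℕ) :
    σ.SameCycle a ((σ ^ i) a) := ⟨(i : ℤ), by rw [zpow_natCast]⟩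

lemma numCycles_eq_reps_card (ρ : Equiv.Perm (Fin n)) :
    numCycles ρ = (reps ρ.SameCycle).card := by
  have hsplit : (reps ρ.SameCycle).card
      = ((reps ρ.SameCycle).filter fun x => ρ x = x).card
        + ((reps ρ.SameCycle).filter fun x => ¬ ρ x = x).card :=
    (Finset.card_filter_add_card_filter_not _).symm
  have h1 : (reps ρ.SameCycle).filter (fun x => ρ x = x) = univ.filter fun x => ρ x = x := by
    ext a
    simp only [Finset.mem_filter, Finset.mem_univ, true_and]
    constructor
    · rintro ⟨_, h⟩; exact h
    · intro h
      refine ⟨mem_reps.2 fun b hb => ?_, h⟩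
      rw [hb.eq_of_left h]
  have h2 : ((reps ρ.SameCycle).filter fun x => ¬ ρ x = x).card
      = ρ.cycleFactorsFinset.card := by
    apply Finset.card_bij (fun a _ => ρ.cycleOf a)
    · intro a ha
      simp only [Finset.mem_filter] at ha
      exact cycleOf_mem_cycleFactorsFinset_iff.2 (mem_support.2 ha.2)
    · intro a1 ha1 a2 ha2 h
      simp only [Finset.mem_filter] at ha1 ha2
      have : a2 ∈ (ρ.cycleOf a1).support := by
        rw [h]
        exact mem_support_cycleOf_iff.2 ⟨Equiv.Perm.SameCycle.refl _ _, mem_support.2 ha2.2⟩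
      have hsc : ρ.SameCycle a1 a2 := (mem_support_cycleOf_iff.1 this).1
      exact reps_eq_of_rel ha1.1 ha2.1 (fun _ _ h => h.symm) hsc
    · intro c hc
      obtain ⟨x0, hx0⟩ := (mem_cycleFactorsFinset_iff.1 hc).1
      have hx0' : ρ x0 ≠ x0 := by
        have := (mem_cycleFactorsFinset_iff.1 hc).2 x0 (mem_support.2 hx0.1)
        rw [← this]; exact hx0.1
      have hEquiv : Equivalence ρ.SameCycle := Equiv.Perm.SameCycle.equivalence ρ
      refine ⟨minClass ρ.SameCycle hEquiv x0, ?_, ?_⟩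
      · simp only [Finset.mem_filter]
        refine ⟨minClass_mem_reps hEquiv x0, ?_⟩
        intro hfix
        exact hx0' (((minClass_rel hEquiv x0).apply_eq_self_iff).2 hfix)
      · have h1 : c = ρ.cycleOf x0 :=
          Equiv.Perm.cycle_is_cycleOf (mem_support.2 hx0.1) hc
        have h2 : ρ.cycleOf (minClass ρ.SameCycle hEquiv x0) = ρ.cycleOf x0 :=
          ((minClass_rel hEquiv x0).symm.cycleOf_eq)
        rw [h2, h1]
  have h3 : (Multiset.card ρ.cycleType) = ρ.cycleFactorsFinset.card := by
    rw [cycleType_def, Multiset.card_map]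
    rfl
  have h1' := congrArg Finset.card h1
  unfold numCycles
  omega

lemma numCycles_le (ρ : Equiv.Perm (Fin n)) : numCycles ρ ≤ n := by
  rw [numCycles_eq_reps_card]; exact reps_card_le _

lemma numCycles_one : numCycles (1 : Equiv.Perm (Fin n)) = n := by
  rw [numCycles_eq_reps_card]
  have : reps (Equiv.Perm.SameCycle (1 : Equiv.Perm (Fin n))) = univ := by
    apply Finset.eq_univ_of_forall
    intro a
    rw [mem_reps]
    intro b hb
    rw [Equiv.Perm.sameCycle_one] at hb
    exact hb.le
  rw [this]; simp

lemma eq_one_of_numCycles_eq (ρ : Equiv.Perm (Fin n)) (h : numCycles ρ = n) : ρ = 1 := by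
  rw [numCycles_eq_reps_card] at h
  have huniv : reps ρ.SameCycle = univ := by
    apply Finset.eq_univ_of_card
    rw [h]; simp
  have hle : ∀ a : Fin n, a ≤ ρ a := by
    intro a
    have := mem_reps.1 (huniv ▸ Finset.mem_univ a)
    exact this (ρ a) ⟨1, by simp⟩
  have hmono : ∀ (i : ℕ) (a : Fin n), a ≤ (ρ ^ i) a := by
    intro i
    induction i with
    | zero => simp
    | succ i ih =>
      intro a
      calc a ≤ ρ a := hle a
      _ ≤ (ρ ^ i) (ρ a) := ih (ρ a)
      _ = (ρ ^ (i+1)) a := by rw [pow_succ]; rfl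
  ext a
  have h1 : (ρ ^ orderOf ρ) a = a := by rw [pow_orderOf_eq_one]; rfl
  have h2 : 0 < orderOf ρ := orderOf_pos ρ
  have : ρ a ≤ (ρ ^ orderOf ρ) a := by
    obtain ⟨k, hk⟩ : ∃ k, orderOf ρ = k + 1 := ⟨orderOf ρ - 1, by omega⟩
    rw [hk, pow_succ]
    exact hmono k (ρ a) |>.trans_eq rfl
  rw [h1] at this
  have := le_antisymm this (hle a)
  simp [this]

end NumCycles

section SwapCycles
open Equiv.Perm
variable {n : ℕ}

lemma sameCycle_invariant {σ : Equiv.Perm (Fin n)} {P : Fin n → Prop}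
    (hP : ∀ u, P u → P (σ u)) {a b : Fin n} (ha : P a) (hs : σ.SameCycle a b) : P b := by
  obtain ⟨i, -, rfl⟩ := hs.exists_pow_eq'
  clear hs
  induction i with
  | zero => simpa using ha
  | succ i ih =>
    rw [pow_succ']
    exact hP _ ih

lemma pow_mul_apply_self {σ : Equiv.Perm (Fin n)} {z : Fin n} {m : ℕ}
    (hz : (σ ^ m) z = z) (q : ℕ) : (σ ^ (m * q)) z = z := by
  induction q with
  | zero => simp
  | succ q ih =>
    have : m * (q + 1) = m + m * q := by ring
    rw [this, pow_add, Equiv.Perm.mul_apply, ih, hz]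

lemma pow_apply_mod {σ : Equiv.Perm (Fin n)} {z : Fin n} {m : ℕ} (hm : 0 < m)
    (hz : (σ ^ m) z = z) (i : ℕ) : (σ ^ i) z = (σ ^ (i % m)) z := by
  conv_lhs => rw [← Nat.mod_add_div i m]
  rw [pow_add, Equiv.Perm.mul_apply, pow_mul_apply_self hz]

/-- trajectory of `swap x y * ρ` starting from `y` follows that of `ρ`, when the
  ρ-cycles of x and y are disjoint, until first return to y -/
lemma swap_reach {ρ : Equiv.Perm (Fin n)} {x y : Fin n}
    (h : ¬ ρ.SameCycle x y) :
    (∀ u, ρ.SameCycle y u → (Equiv.swap x y * ρ).SameCycle y u) ∧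
      (Equiv.swap x y * ρ).SameCycle y x := by
  set σ := Equiv.swap x y * ρ with hσ
  have hex : ∃ m, 0 < m ∧ (ρ ^ m) y = y :=
    ⟨orderOf ρ, orderOf_pos ρ, by rw [pow_orderOf_eq_one]; rfl⟩
  obtain ⟨m, hmpos, hmy, hmin⟩ : ∃ m, 0 < m ∧ (ρ ^ m) y = y ∧
      ∀ j, j < m → ¬ (0 < j ∧ (ρ ^ j) y = y) :=
    ⟨Nat.find hex, (Nat.find_spec hex).1, (Nat.find_spec hex).2,
      fun j hj => Nat.find_min hex hj⟩
  have traj : ∀ k, k < m → (σ ^ k) y = (ρ ^ k) y := by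
    intro k
    induction k with
    | zero => intro _; simp
    | succ k ih =>
      intro hk
      have hk' : k < m := Nat.lt_of_succ_lt hk
      rw [pow_succ', Equiv.Perm.mul_apply, ih hk', hσ, Equiv.Perm.mul_apply]
      have heq : ρ ((ρ ^ k) y) = (ρ ^ (k+1)) y := by rw [pow_succ']; rfl
      rw [heq]
      have hne1 : (ρ ^ (k+1)) y ≠ x := by
        intro he
        exact h (Equiv.Perm.SameCycle.symm ⟨((k:ℤ)+1), by rw [← he]; norm_cast⟩)
      have hne2 : (ρ ^ (k+1)) y ≠ y := fun he => hmin (k+1) hk ⟨Nat.succ_pos k, he⟩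
      exact Equiv.swap_apply_of_ne_of_ne hne1 hne2
  have hreach : (σ ^ m) y = x := by
    obtain ⟨m', rfl⟩ : ∃ m', m = m' + 1 := ⟨m - 1, by omega⟩
    rw [pow_succ', Equiv.Perm.mul_apply, traj m' (Nat.lt_succ_self m'), hσ,
      Equiv.Perm.mul_apply]
    have heq : ρ ((ρ ^ m') y) = (ρ ^ (m'+1)) y := by rw [pow_succ']; rfl
    rw [heq, hmy, Equiv.swap_apply_right]
  constructor
  · intro u hu
    obtain ⟨i, -, rfl⟩ := hu.exists_pow_eq'
    have h1 : (ρ ^ i) y = (ρ ^ (i % m)) y := pow_apply_mod hmpos hmy i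
    have h2 : (σ ^ (i % m)) y = (ρ ^ (i % m)) y := traj _ (Nat.mod_lt _ hmpos)
    rw [h1, ← h2]
    exact sameCycle_of_nat_pow _
  · exact ⟨(m : ℤ), by rw [zpow_natCast, hreach]⟩

lemma swap_merge_sub {ρ : Equiv.Perm (Fin n)} {x y : Fin n}
    (h : ¬ ρ.SameCycle x y) {a b : Fin n}
    (hab : (Equiv.swap x y * ρ).SameCycle a b) : mergeRel ρ.SameCycle x y a b := by
  refine sameCycle_invariant (σ := Equiv.swap x y * ρ)
    (P := fun u => mergeRel ρ.SameCycle x y a u) ?_ (Or.inl (Equiv.Perm.SameCycle.refl _ _)) hab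
  intro u hu
  have happ : (Equiv.swap x y * ρ) u = Equiv.swap x y (ρ u) := rfl
  have hstep : ρ.SameCycle u (ρ u) := ⟨1, by simp⟩
  rcases eq_or_ne (ρ u) x with hx | hx
  · rw [happ, hx, Equiv.swap_apply_left]
    have hux : ρ.SameCycle u x := hx ▸ hstep
    rcases hu with hu | ⟨hax, hyu⟩ | ⟨hay, hxu⟩
    · exact Or.inr (Or.inl ⟨hu.trans hux, Equiv.Perm.SameCycle.refl _ _⟩)
    · exact absurd ((hyu.trans hux).symm) h
    · exact Or.inl hay
  · rcases eq_or_ne (ρ u) y with hy | hy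
    · rw [happ, hy, Equiv.swap_apply_right]
      have huy : ρ.SameCycle u y := hy ▸ hstep
      rcases hu with hu | ⟨hax, hyu⟩ | ⟨hay, hxu⟩
      · exact Or.inr (Or.inr ⟨hu.trans huy, Equiv.Perm.SameCycle.refl _ _⟩)
      · exact Or.inl hax
      · exact absurd (hxu.trans huy) h
    · rw [happ, Equiv.swap_apply_of_ne_of_ne hx hy]
      rcases hu with hu | ⟨hax, hyu⟩ | ⟨hay, hxu⟩
      · exact Or.inl (hu.trans hstep)
      · exact Or.inr (Or.inl ⟨hax, hyu.trans hstep⟩)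
      · exact Or.inr (Or.inr ⟨hay, hxu.trans hstep⟩)

lemma swap_mul_sameCycle_merge {ρ : Equiv.Perm (Fin n)} {x y : Fin n} (hxy : x ≠ y)
    (h : ¬ ρ.SameCycle x y) (a b : Fin n) :
    (Equiv.swap x y * ρ).SameCycle a b ↔ mergeRel ρ.SameCycle x y a b := by
  have hyx : ¬ ρ.SameCycle y x := fun hc => h hc.symm
  have hx := swap_reach (x := y) (y := x) hyx
  have hy := swap_reach (x := x) (y := y) h
  rw [Equiv.swap_comm y x] at hx
  constructor
  · exact swap_merge_sub h
  · rintro (huv | ⟨hax, hyb⟩ | ⟨hay, hxb⟩)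
    · -- same ρ-cycle
      by_cases hcx : ρ.SameCycle x a
      · exact ((hx.1 a hcx).symm.trans (hx.1 b (hcx.trans huv)))
      · by_cases hcy : ρ.SameCycle y a
        · exact ((hy.1 a hcy).symm.trans (hy.1 b (hcy.trans huv)))
        · -- untouched cycle
          have huntouched : ∀ k, ((Equiv.swap x y * ρ) ^ k) a = (ρ ^ k) a := by
            intro k
            induction k with
            | zero => simp
            | succ k ih =>
              rw [pow_succ', Equiv.Perm.mul_apply, ih, Equiv.Perm.mul_apply]
              have heq : ρ ((ρ ^ k) a) = (ρ ^ (k+1)) a := by rw [pow_succ']; rfl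
              rw [heq]
              have h1 : (ρ ^ (k+1)) a ≠ x := fun he =>
                hcx (Equiv.Perm.SameCycle.symm ⟨((k:ℤ)+1), by rw [← he]; norm_cast⟩)
              have h2 : (ρ ^ (k+1)) a ≠ y := fun he =>
                hcy (Equiv.Perm.SameCycle.symm ⟨((k:ℤ)+1), by rw [← he]; norm_cast⟩)
              exact Equiv.swap_apply_of_ne_of_ne h1 h2
          obtain ⟨i, -, rfl⟩ := huv.exists_pow_eq'
          rw [← huntouched i]
          exact sameCycle_of_nat_pow _
    · exact ((hx.1 a hax.symm).symm.trans (hx.2.trans (hy.1 b hyb)))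
    · exact ((hy.1 a hay.symm).symm.trans (hy.2.trans (hx.1 b hxb)))

lemma swap_mul_not_sameCycle_split {ρ : Equiv.Perm (Fin n)} {x y : Fin n} (hxy : x ≠ y)
    (h : ρ.SameCycle x y) : ¬ (Equiv.swap x y * ρ).SameCycle x y := by
  set σ := Equiv.swap x y * ρ with hσ
  have hex : ∃ d, 0 < d ∧ (ρ ^ d) x = y := by
    obtain ⟨i, hipos, -, hi⟩ := h.exists_pow_eq''
    exact ⟨i, hipos, hi⟩
  obtain ⟨d, hdpos, hdy, hmin⟩ : ∃ d, 0 < d ∧ (ρ ^ d) x = y ∧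
      ∀ j, j < d → ¬ (0 < j ∧ (ρ ^ j) x = y) :=
    ⟨Nat.find hex, (Nat.find_spec hex).1, (Nat.find_spec hex).2,
      fun j hj => Nat.find_min hex hj⟩
  have traj : ∀ k, k < d → (σ ^ k) x = (ρ ^ k) x := by
    intro k
    induction k with
    | zero => intro _; simp
    | succ k ih =>
      intro hk
      have hk' : k < d := Nat.lt_of_succ_lt hk
      rw [pow_succ', Equiv.Perm.mul_apply, ih hk', hσ, Equiv.Perm.mul_apply]
      have heq : ρ ((ρ ^ k) x) = (ρ ^ (k+1)) x := by rw [pow_succ']; rfl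
      rw [heq]
      have hne2 : (ρ ^ (k+1)) x ≠ y := fun he => hmin (k+1) hk ⟨Nat.succ_pos k, he⟩
      have hne1 : (ρ ^ (k+1)) x ≠ x := by
        intro he
        have harith : d = (d - (k+1)) + (k+1) := by omega
        have : (ρ ^ d) x = (ρ ^ (d - (k+1))) x := by
          conv_lhs => rw [harith]
          rw [pow_add, Equiv.Perm.mul_apply, he]
        have hcontra : (ρ ^ (d - (k+1))) x = y := by rw [← this, hdy]
        exact hmin (d - (k+1)) (by omega) ⟨by omega, hcontra⟩
      exact Equiv.swap_apply_of_ne_of_ne hne1 hne2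
  have hper : (σ ^ d) x = x := by
    obtain ⟨d', rfl⟩ : ∃ d', d = d' + 1 := ⟨d - 1, by omega⟩
    rw [pow_succ', Equiv.Perm.mul_apply, traj d' (Nat.lt_succ_self d'), hσ,
      Equiv.Perm.mul_apply]
    have heq : ρ ((ρ ^ d') x) = (ρ ^ (d'+1)) x := by rw [pow_succ']; rfl
    rw [heq, hdy, Equiv.swap_apply_right]
  intro hs
  obtain ⟨i, -, hi⟩ := hs.exists_pow_eq'
  rw [pow_apply_mod hdpos hper i, traj _ (Nat.mod_lt _ hdpos)] at hi
  rcases Nat.eq_zero_or_pos (i % d) with h0 | h0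
  · rw [h0] at hi; simp at hi; exact hxy hi
  · exact hmin (i % d) (Nat.mod_lt _ hdpos) ⟨h0, hi⟩

lemma numCycles_swap_mul_of_not_sameCycle {ρ : Equiv.Perm (Fin n)} {x y : Fin n}
    (hxy : x ≠ y) (h : ¬ ρ.SameCycle x y) :
    numCycles (Equiv.swap x y * ρ) + 1 = numCycles ρ := by
  rw [numCycles_eq_reps_card, numCycles_eq_reps_card,
      reps_congr (swap_mul_sameCycle_merge hxy h)]
  exact merge_count (Equiv.Perm.SameCycle.equivalence ρ) h

lemma numCycles_swap_mul_of_sameCycle {ρ : Equiv.Perm (Fin n)} {x y : Fin n}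
    (hxy : x ≠ y) (h : ρ.SameCycle x y) :
    numCycles (Equiv.swap x y * ρ) = numCycles ρ + 1 := by
  have h2 := swap_mul_not_sameCycle_split hxy h
  have h3 := numCycles_swap_mul_of_not_sameCycle hxy h2
  rw [← mul_assoc, Equiv.swap_mul_self, one_mul] at h3
  omega

lemma numCycles_swap_mul_ge {ρ : Equiv.Perm (Fin n)} {x y : Fin n} (hxy : x ≠ y) :
    numCycles ρ ≤ numCycles (Equiv.swap x y * ρ) + 1 := by
  by_cases h : ρ.SameCycle x y
  · rw [numCycles_swap_mul_of_sameCycle hxy h]; omega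
  · rw [numCycles_swap_mul_of_not_sameCycle hxy h]

end SwapCycles

section Star
open Equiv.Perm
variable {n : ℕ}

def PRel (π σ : Equiv.Perm (Fin n)) : Fin n → Fin n → Prop :=
  Relation.EqvGen (fun u v => v = π u ∨ v = σ u)

lemma prel_equivalence (π σ : Equiv.Perm (Fin n)) : Equivalence (PRel π σ) :=
  Relation.EqvGen.is_equivalence _

lemma rel_step_pi (π σ : Equiv.Perm (Fin n)) (u : Fin n) : PRel π σ u (π u) :=
  Relation.EqvGen.rel _ _ (Or.inl rfl)

lemma rel_step_sigma (π σ : Equiv.Perm (Fin n)) (u : Fin n) : PRel π σ u (σ u) :=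
  Relation.EqvGen.rel _ _ (Or.inr rfl)

lemma rel_of_sameCycle_perm {π σ g : Equiv.Perm (Fin n)}
    (hg : ∀ u, PRel π σ u (g u)) {a b : Fin n} (h : g.SameCycle a b) : PRel π σ a b := by
  refine sameCycle_invariant (σ := g) (P := fun u => PRel π σ a u) ?_
    ((prel_equivalence π σ).refl a) h
  intro u hu
  exact (prel_equivalence π σ).trans hu (hg u)

lemma rel_of_sameCycle_pi {π σ : Equiv.Perm (Fin n)} {a b : Fin n}
    (h : π.SameCycle a b) : PRel π σ a b :=
  rel_of_sameCycle_perm (fun u => rel_step_pi π σ u) h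

lemma rel_of_sameCycle_mul {π σ : Equiv.Perm (Fin n)} {a b : Fin n}
    (h : (σ * π).SameCycle a b) : PRel π σ a b := by
  refine rel_of_sameCycle_perm ?_ h
  intro u
  exact (prel_equivalence π σ).trans (rel_step_pi π σ u) (rel_step_sigma π σ (π u))

lemma rel_one (π : Equiv.Perm (Fin n)) (a b : Fin n) :
    PRel π 1 a b ↔ π.SameCycle a b := by
  constructor
  · intro h
    induction h with
    | rel u v huv =>
      rcases huv with h | h
      · exact h ▸ ⟨1, by simp⟩
      · simp only [Equiv.Perm.one_apply] at h
        exact h ▸ Equiv.Perm.SameCycle.refl _ _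
    | refl u => exact Equiv.Perm.SameCycle.refl _ _
    | symm u v _ ih => exact ih.symm
    | trans u v w _ _ ih1 ih2 => exact ih1.trans ih2
  · exact rel_of_sameCycle_pi

lemma mergeRel_symm {r : Fin n → Fin n → Prop} (hr : Equivalence r) {x y a b : Fin n}
    (h : mergeRel r x y a b) : mergeRel r x y b a := by
  rcases h with h | ⟨h1, h2⟩ | ⟨h1, h2⟩
  · exact Or.inl (hr.symm h)
  · exact Or.inr (Or.inr ⟨hr.symm h2, hr.symm h1⟩)
  · exact Or.inr (Or.inl ⟨hr.symm h2, hr.symm h1⟩)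

lemma mergeRel_trans {r : Fin n → Fin n → Prop} (hr : Equivalence r) {x y a b c : Fin n}
    (h1 : mergeRel r x y a b) (h2 : mergeRel r x y b c) : mergeRel r x y a c := by
  rcases h1 with h1 | ⟨hax, hyb⟩ | ⟨hay, hxb⟩ <;>
    rcases h2 with h2 | ⟨hbx, hyc⟩ | ⟨hby, hxc⟩
  · exact Or.inl (hr.trans h1 h2)
  · exact Or.inr (Or.inl ⟨hr.trans h1 hbx, hyc⟩)
  · exact Or.inr (Or.inr ⟨hr.trans h1 hby, hxc⟩)
  · exact Or.inr (Or.inl ⟨hax, hr.trans hyb h2⟩)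
  · exact Or.inl (hr.trans hax (hr.trans (hr.symm (hr.trans hyb hbx)) hyc))
  · exact Or.inl (hr.trans hax hxc)
  · exact Or.inr (Or.inr ⟨hay, hr.trans hxb h2⟩)
  · exact Or.inl (hr.trans hay hyc)
  · exact Or.inl (hr.trans (hr.trans hay (hr.symm (hr.trans hxb hby))) hxc)

lemma mergeRel_self {r : Fin n → Fin n → Prop} (hr : Equivalence r) {x y : Fin n}
    (h : r x y) (a b : Fin n) : mergeRel r x y a b ↔ r a b := by
  constructor
  · rintro (hab | ⟨hax, hyb⟩ | ⟨hay, hxb⟩)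
    · exact hab
    · exact hr.trans hax (hr.trans h hyb)
    · exact hr.trans hay (hr.trans (hr.symm h) hxb)
  · exact Or.inl

lemma rel_merge_iff {π σ : Equiv.Perm (Fin n)} {x : Fin n} (hx : σ x ≠ x) (u v : Fin n) :
    PRel π σ u v ↔ mergeRel (PRel π (Equiv.swap x (σ x) * σ)) x (σ x) u v := by
  set σ' := Equiv.swap x (σ x) * σ with hσ'
  have hE := prel_equivalence π σ'
  have hback : ∀ w, σ w = Equiv.swap x (σ x) (σ' w) := by
    intro w
    rw [hσ']
    simp [Equiv.Perm.mul_apply, Equiv.swap_apply_self]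
  have hsub : ∀ a b, PRel π σ' a b → PRel π σ a b := by
    intro a b h
    induction h with
    | rel a b hab =>
      rcases hab with h | h
      · exact h ▸ rel_step_pi π σ a
      · subst h
        have happ : σ' a = Equiv.swap x (σ x) (σ a) := rfl
        rcases eq_or_ne (σ a) x with h1 | h1
        · rw [happ, h1, Equiv.swap_apply_left]
          exact (prel_equivalence π σ).trans (h1 ▸ rel_step_sigma π σ a)
            (rel_step_sigma π σ x)
        · rcases eq_or_ne (σ a) (σ x) with h2 | h2
          · rw [happ, h2, Equiv.swap_apply_right]
            have : a = x := σ.injective h2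
            exact this ▸ (prel_equivalence π σ).refl x
          · rw [happ, Equiv.swap_apply_of_ne_of_ne h1 h2]
            exact rel_step_sigma π σ a
    | refl a => exact (prel_equivalence π σ).refl a
    | symm a b _ ih => exact (prel_equivalence π σ).symm ih
    | trans a b c _ _ ih1 ih2 => exact (prel_equivalence π σ).trans ih1 ih2
  constructor
  · intro h
    induction h with
    | rel u v huv =>
      rcases huv with h | h
      · exact Or.inl (h ▸ rel_step_pi π σ' u)
      · subst h
        rcases eq_or_ne (σ' u) x with h1 | h1
        · rw [hback u, h1, Equiv.swap_apply_left]
          exact Or.inr (Or.inl ⟨h1 ▸ rel_step_sigma π σ' u, hE.refl _⟩)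
        · rcases eq_or_ne (σ' u) (σ x) with h2 | h2
          · rw [hback u, h2, Equiv.swap_apply_right]
            exact Or.inr (Or.inr ⟨h2 ▸ rel_step_sigma π σ' u, hE.refl _⟩)
          · rw [hback u, Equiv.swap_apply_of_ne_of_ne h1 h2]
            exact Or.inl (rel_step_sigma π σ' u)
    | refl u => exact Or.inl (hE.refl u)
    | symm u v _ ih => exact mergeRel_symm hE ih
    | trans u v w _ _ ih1 ih2 => exact mergeRel_trans hE ih1 ih2
  · rintro (h | ⟨h1, h2⟩ | ⟨h1, h2⟩)
    · exact hsub _ _ h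
    · exact (prel_equivalence π σ).trans (hsub _ _ h1)
        ((prel_equivalence π σ).trans (rel_step_sigma π σ x) (hsub _ _ h2))
    · exact (prel_equivalence π σ).trans (hsub _ _ h1)
        ((prel_equivalence π σ).trans ((prel_equivalence π σ).symm (rel_step_sigma π σ x))
          (hsub _ _ h2))

lemma numCycles_swap_mul_le {ρ : Equiv.Perm (Fin n)} {x y : Fin n} (hxy : x ≠ y) :
    numCycles (Equiv.swap x y * ρ) ≤ numCycles ρ + 1 := by
  by_cases h : ρ.SameCycle x y
  · rw [numCycles_swap_mul_of_sameCycle hxy h]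
  · have := numCycles_swap_mul_of_not_sameCycle hxy h
    omega

lemma star : ∀ (k : ℕ) (σ π : Equiv.Perm (Fin n)), n - numCycles σ ≤ k →
    numCycles π + numCycles σ + numCycles (σ * π) ≤ n + 2 * (reps (PRel π σ)).card := by
  intro k
  induction k with
  | zero =>
    intro σ π hk
    have h1 : numCycles σ = n := le_antisymm (numCycles_le σ) (by omega)
    have h2 : σ = 1 := eq_one_of_numCycles_eq σ h1
    subst h2
    rw [numCycles_one, one_mul, reps_congr (rel_one π), ← numCycles_eq_reps_card]
    omega
  | succ k ih =>
    intro σ π hk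
    by_cases h1 : σ = 1
    · subst h1
      rw [numCycles_one, one_mul, reps_congr (rel_one π), ← numCycles_eq_reps_card]
      omega
    · obtain ⟨x, hx⟩ : ∃ x, σ x ≠ x := by
        by_contra hc
        push_neg at hc
        exact h1 (Equiv.ext fun a => by rw [hc a]; rfl)
      have hxb : x ≠ σ x := fun h => hx h.symm
      set σ' := Equiv.swap x (σ x) * σ with hσ'
      have hsplit : numCycles σ' = numCycles σ + 1 :=
        numCycles_swap_mul_of_sameCycle hxb ⟨1, by simp⟩
      have hback : σ = Equiv.swap x (σ x) * σ' := by
        rw [hσ', ← mul_assoc, Equiv.swap_mul_self, one_mul]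
      have hle : n - numCycles σ' ≤ k := by
        have := numCycles_le σ'
        omega
      have hIH := ih σ' π hle
      have hrel := rel_merge_iff (π := π) hx
      by_cases hab : PRel π σ' x (σ x)
      · have hiff : ∀ u v, PRel π σ u v ↔ PRel π σ' u v := fun u v =>
          (hrel u v).trans (mergeRel_self (prel_equivalence π σ') hab u v)
        rw [reps_congr hiff]
        have hmul : numCycles (σ * π) ≤ numCycles (σ' * π) + 1 := by
          have hprod : σ * π = Equiv.swap x (σ x) * (σ' * π) := by
            rw [← mul_assoc, ← hback]
          rw [hprod]
          exact numCycles_swap_mul_le hxb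
        omega
      · have hcount : (reps (PRel π σ)).card + 1 = (reps (PRel π σ')).card := by
          rw [reps_congr hrel]
          exact merge_count (prel_equivalence π σ') hab
        have hnsc : ¬ (σ' * π).SameCycle x (σ x) := fun hc => hab (rel_of_sameCycle_mul hc)
        have hmerge : numCycles (σ * π) + 1 = numCycles (σ' * π) := by
          have hprod : σ * π = Equiv.swap x (σ x) * (σ' * π) := by
            rw [← mul_assoc, ← hback]
          rw [hprod]
          exact numCycles_swap_mul_of_not_sameCycle hxb hnsc
        omega

end Star

section Gamma
open Equiv.Perm
variable {p q : ℕ}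

lemma permCongr_mul' {α β : Type*} (e : α ≃ β) (g h : Equiv.Perm α) :
    e.permCongr (g * h) = e.permCongr g * e.permCongr h := by
  ext x
  simp [Equiv.permCongr_apply, Equiv.Perm.mul_apply]

lemma permCongr_one' {α β : Type*} (e : α ≃ β) :
    e.permCongr (1 : Equiv.Perm α) = 1 := by
  ext x; simp

lemma permCongr_pow' {α β : Type*} (e : α ≃ β) (g : Equiv.Perm α) (i : ℕ) :
    (e.permCongr g) ^ i = e.permCongr (g ^ i) := by
  induction i with
  | zero => simp [permCongr_one']
  | succ i ih => rw [pow_succ, pow_succ, ih, permCongr_mul']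

lemma permCongr_inv' {α β : Type*} (e : α ≃ β) (g : Equiv.Perm α) :
    (e.permCongr g)⁻¹ = e.permCongr g⁻¹ := by
  apply inv_eq_of_mul_eq_one_right
  rw [← permCongr_mul']
  simp [permCongr_one']

lemma permCongr_zpow' {α β : Type*} (e : α ≃ β) (g : Equiv.Perm α) (i : ℤ) :
    (e.permCongr g) ^ i = e.permCongr (g ^ i) := by
  obtain ⟨i, rfl | rfl⟩ := i.eq_nat_or_neg
  · rw [zpow_natCast, zpow_natCast, permCongr_pow']
  · rw [zpow_neg, zpow_neg, zpow_natCast, zpow_natCast, permCongr_pow', permCongr_inv']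

lemma sameCycle_permCongr {α β : Type*} (e : α ≃ β) (g : Equiv.Perm α) (u v : β) :
    (e.permCongr g).SameCycle u v ↔ g.SameCycle (e.symm u) (e.symm v) := by
  constructor
  · rintro ⟨i, hi⟩
    refine ⟨i, ?_⟩
    rw [permCongr_zpow'] at hi
    rw [← hi]
    simp [Equiv.permCongr_apply]
  · rintro ⟨i, hi⟩
    refine ⟨i, ?_⟩
    rw [permCongr_zpow', Equiv.permCongr_apply, hi]
    simp

lemma sumCongr_zpow {α β : Type*} [DecidableEq α] [DecidableEq β]
    (f : Equiv.Perm α) (g : Equiv.Perm β) (i : ℤ) :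
    (Equiv.sumCongr f g) ^ i = Equiv.sumCongr (f ^ i) (g ^ i) := by
  have h := MonoidHom.map_zpow (Equiv.Perm.sumCongrHom α β) (f, g) i
  simp only [Equiv.Perm.sumCongrHom_apply] at h
  rw [← h]
  have h1 : ((f, g) ^ i).1 = f ^ i := by
    induction i using Int.induction_on <;> simp
  have h2 : ((f, g) ^ i).2 = g ^ i := by
    induction i using Int.induction_on <;> simp
  rw [h1, h2]

lemma finRotate_sameCycle (m : ℕ) (a b : Fin m) : (finRotate m).SameCycle a b := by
  match m with
  | 0 => exact a.elim0
  | 1 =>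
    have : a = b := Subsingleton.elim a b
    exact this ▸ Equiv.Perm.SameCycle.refl _ _
  | (m + 2) =>
    obtain ⟨z, hz, hall⟩ := isCycle_finRotate (n := m)
    have ha : finRotate (m+2) a ≠ a := by
      have : a ∈ (finRotate (m+2)).support := by rw [support_finRotate]; exact Finset.mem_univ a
      exact mem_support.1 this
    have hb : finRotate (m+2) b ≠ b := by
      have : b ∈ (finRotate (m+2)).support := by rw [support_finRotate]; exact Finset.mem_univ b
      exact mem_support.1 this
    exact (hall ha).symm.trans (hall hb)

lemma finSum_symm_lt {u : Fin (p+q)} (h : (u:ℕ) < p) :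
    finSumFinEquiv.symm u = Sum.inl ⟨u.val, h⟩ := by
  have huc : u = Fin.castAdd q ⟨u.val, h⟩ := by ext; simp
  conv_lhs => rw [huc]
  rw [finSumFinEquiv_symm_apply_castAdd]

lemma finSum_symm_ge {u : Fin (p+q)} (h : p ≤ (u:ℕ)) :
    finSumFinEquiv.symm u = Sum.inr ⟨u.val - p, by omega⟩ := by
  have : u = Fin.natAdd p ⟨u.val - p, by omega⟩ := by
    ext; simp [Fin.natAdd]; omega
  conv_lhs => rw [this]
  rw [finSumFinEquiv_symm_apply_natAdd]

lemma gamma_sameCycle (p q : ℕ) (u v : Fin (p+q)) :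
    (gammaPQ p q).SameCycle u v ↔ ((u:ℕ) < p ↔ (v:ℕ) < p) := by
  unfold gammaPQ
  rw [sameCycle_permCongr]
  constructor
  · intro h
    by_cases hu : (u:ℕ) < p <;> by_cases hv : (v:ℕ) < p
    · tauto
    · exfalso
      rw [finSum_symm_lt hu, finSum_symm_ge (by omega)] at h
      obtain ⟨i, hi⟩ := h
      rw [sumCongr_zpow] at hi
      simp [Equiv.sumCongr_apply] at hi
    · exfalso
      rw [finSum_symm_ge (by omega), finSum_symm_lt hv] at h
      obtain ⟨i, hi⟩ := h
      rw [sumCongr_zpow] at hi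
      simp [Equiv.sumCongr_apply] at hi
    · tauto
  · intro h
    by_cases hu : (u:ℕ) < p
    · have hv : (v:ℕ) < p := h.1 hu
      rw [finSum_symm_lt hu, finSum_symm_lt hv]
      obtain ⟨i, hi⟩ := finRotate_sameCycle p ⟨u.val, hu⟩ ⟨v.val, hv⟩
      exact ⟨i, by rw [sumCongr_zpow]; simp [Equiv.sumCongr_apply, hi]⟩
    · have hv : ¬ (v:ℕ) < p := fun hc => hu (h.2 hc)
      rw [finSum_symm_ge (by omega), finSum_symm_ge (by omega)]
      obtain ⟨i, hi⟩ := finRotate_sameCycle q ⟨u.val - p, by omega⟩ ⟨v.val - p, by omega⟩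
      exact ⟨i, by rw [sumCongr_zpow]; simp [Equiv.sumCongr_apply, hi]⟩

lemma numCycles_gamma (hp : 1 ≤ p) (hq : 1 ≤ q) : numCycles (gammaPQ p q) = 2 := by
  rw [numCycles_eq_reps_card]
  have h0 : (0:ℕ) < p + q := by omega
  have hpq : p < p + q := by omega
  have hkey : reps (gammaPQ p q).SameCycle = {(⟨0, h0⟩ : Fin (p+q)), ⟨p, hpq⟩} := by
    ext a
    rw [mem_reps]
    simp only [Finset.mem_insert, Finset.mem_singleton]
    constructor
    · intro h
      by_cases ha : (a:ℕ) < p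
      · left
        have : a ≤ ⟨0, h0⟩ := h _ ((gamma_sameCycle p q a ⟨0, h0⟩).2
          (by simp only [Fin.val_mk]; exact iff_of_true ha (by omega)))
        have := Fin.le_def.1 this
        ext
        simpa using this
      · right
        have : a ≤ ⟨p, hpq⟩ := h _ ((gamma_sameCycle p q a ⟨p, hpq⟩).2
          (by simp only [Fin.val_mk]; exact iff_of_false ha (by omega)))
        have h2 := Fin.le_def.1 this
        ext
        simp at h2 ⊢
        omega
    · rintro (rfl | rfl)
      · intro b _
        exact Fin.le_def.mpr (by simp)
      · intro b hb
        rw [gamma_sameCycle] at hb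
        simp only [Fin.val_mk] at hb
        have hbp : ¬ (b:ℕ) < p := fun hc => by omega
        exact Fin.le_def.mpr (by simp only [Fin.val_mk]; omega)
  rw [hkey]
  rw [Finset.card_insert_of_notMem (by simp; omega), Finset.card_singleton]

lemma star_through {p q : ℕ} (hp : 1 ≤ p) (hq : 1 ≤ q) (π : Equiv.Perm (Fin (p+q)))
    (hthrough : ∃ i j, π.SameCycle i j ∧ ¬ (gammaPQ p q).SameCycle i j) :
    numCycles π + numCycles (gammaPQ p q * π⁻¹) ≤ p + q := by
  set σ := gammaPQ p q * π⁻¹ with hσ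
  have hprod : σ * π = gammaPQ p q := by
    rw [hσ, mul_assoc]
    simp
  obtain ⟨i, j, hij, hγij⟩ := hthrough
  have hγsub : ∀ {u v : Fin (p+q)}, (gammaPQ p q).SameCycle u v → PRel π σ u v := by
    intro u v h
    exact rel_of_sameCycle_mul (hprod ▸ h)
  have hall : ∀ u v : Fin (p+q), PRel π σ u v := by
    have hE := prel_equivalence π σ
    have hreli : ∀ w, PRel π σ w i ∨ PRel π σ w j := by
      intro w
      rw [gamma_sameCycle] at hγij
      by_cases hwp : (w:ℕ) < p <;> by_cases hip : (i:ℕ) < p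
      · exact Or.inl (hγsub ((gamma_sameCycle p q w i).2 (by tauto)))
      · have hjp : (j:ℕ) < p := by tauto
        exact Or.inr (hγsub ((gamma_sameCycle p q w j).2 (by tauto)))
      · have hjp : ¬ (j:ℕ) < p := by tauto
        exact Or.inr (hγsub ((gamma_sameCycle p q w j).2 (by tauto)))
      · exact Or.inl (hγsub ((gamma_sameCycle p q w i).2 (by tauto)))
    intro u v
    have hijrel : PRel π σ i j := rel_of_sameCycle_pi hij
    rcases hreli u with hu | hu <;> rcases hreli v with hv | hv
    · exact hE.trans hu (hE.symm hv)
    · exact hE.trans hu (hE.trans hijrel (hE.symm hv))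
    · exact hE.trans hu (hE.trans (hE.symm hijrel) (hE.symm hv))
    · exact hE.trans hu (hE.symm hv)
  have hn : 0 < p + q := by omega
  have hreps : reps (PRel π σ) = {(⟨0, hn⟩ : Fin (p+q))} := by
    ext a
    rw [mem_reps]
    simp only [Finset.mem_singleton]
    constructor
    · intro h
      have := h _ (hall a ⟨0, hn⟩)
      have := Fin.le_def.1 this
      ext
      simpa using this
    · rintro rfl
      intro b _
      exact Fin.le_def.mpr (by simp)
  have hstar := star (n := p + q) (p + q) σ π (by omega)
  rw [hprod, numCycles_gamma hp hq, hreps] at hstar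
  simp only [Finset.card_singleton] at hstar
  omega

end Gamma

section MainInduction
open Equiv.Perm
variable {n : ℕ}

lemma cycleLen_eq_one_of_fixed {σ : Equiv.Perm (Fin n)} {k : Fin n} (h : σ k = k) :
    cycleLen σ k = 1 := by
  unfold cycleLen
  have : (univ.filter fun m => σ.SameCycle k m) = {k} := by
    ext m
    simp only [Finset.mem_filter, Finset.mem_univ, true_and, Finset.mem_singleton]
    constructor
    · intro hm; exact (hm.eq_of_left h).symm
    · rintro rfl; exact Equiv.Perm.SameCycle.refl _ _
  rw [this, Finset.card_singleton]

lemma cycleLen_le_two_of_sq {σ : Equiv.Perm (Fin n)} {k : Fin n} (h : σ (σ k) = k) :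
    cycleLen σ k ≤ 2 := by
  unfold cycleLen
  have hsub : (univ.filter fun m => σ.SameCycle k m) ⊆ {k, σ k} := by
    intro m hm
    simp only [Finset.mem_filter, Finset.mem_univ, true_and] at hm
    obtain ⟨i, -, rfl⟩ := hm.exists_pow_eq'
    simp only [Finset.mem_insert, Finset.mem_singleton]
    induction i with
    | zero => left; simp
    | succ i ih =>
      rw [pow_succ', Equiv.Perm.mul_apply]
      rcases ih (sameCycle_of_nat_pow i) with h1 | h1
      · right; rw [h1]
      · left; rw [h1, h]
  calc (univ.filter fun m => σ.SameCycle k m).card ≤ ({k, σ k} : Finset (Fin n)).card :=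
        Finset.card_le_card hsub
  _ ≤ 2 := Finset.card_insert_le _ _ |>.trans (by simp)

lemma three_le_cycleLen {σ : Equiv.Perm (Fin n)} {k b c : Fin n}
    (hkb : k ≠ b) (hkc : k ≠ c) (hbc : b ≠ c)
    (h1 : σ.SameCycle k b) (h2 : σ.SameCycle k c) : 3 ≤ cycleLen σ k := by
  unfold cycleLen
  have hsub : ({k, b, c} : Finset (Fin n)) ⊆ univ.filter fun m => σ.SameCycle k m := by
    intro m hm
    simp only [Finset.mem_insert, Finset.mem_singleton] at hm
    simp only [Finset.mem_filter, Finset.mem_univ, true_and]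
    rcases hm with rfl | rfl | rfl
    · exact Equiv.Perm.SameCycle.refl _ _
    · exact h1
    · exact h2
  have : ({k, b, c} : Finset (Fin n)).card = 3 := by
    rw [Finset.card_insert_of_notMem (by simp [hkb, hkc]),
        Finset.card_insert_of_notMem (by simp [hbc]), Finset.card_singleton]
  rw [← this]
  exact Finset.card_le_card hsub

lemma orbit_eq_pair {σ : Equiv.Perm (Fin n)} {k b : Fin n} (hkb : k ≠ b)
    (hb : σ k = b) (hlen : cycleLen σ k ≤ 2) : σ b = k := by
  by_contra hc
  have h1 : σ b ≠ b := by
    intro h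
    exact hkb (σ.injective (by rw [hb, h]))
  have h2 : σ.SameCycle k b := hb ▸ ⟨1, by simp⟩
  have h3 : σ.SameCycle k (σ b) := h2.trans ⟨1, by simp⟩
  have := three_le_cycleLen hkb (fun h => hc h.symm) (fun h => h1 h.symm) h2 h3
  omega

lemma exists_nonrep_pair {σ : Equiv.Perm (Fin n)} {a b : Fin n} (hab : a ≠ b)
    (h : σ.SameCycle a b) : ∃ w, (w = a ∨ w = b) ∧ w ∉ reps σ.SameCycle := by
  by_cases ha : a ∈ reps σ.SameCycle
  · refine ⟨b, Or.inr rfl, fun hb => ?_⟩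
    exact hab (reps_eq_of_rel ha hb (fun _ _ h => h.symm) h)
  · exact ⟨a, Or.inl rfl, ha⟩

lemma numCycles_add_two_le {σ : Equiv.Perm (Fin n)} {w1 w2 : Fin n} (h12 : w1 ≠ w2)
    (h1 : w1 ∉ reps σ.SameCycle) (h2 : w2 ∉ reps σ.SameCycle) : numCycles σ + 2 ≤ n := by
  rw [numCycles_eq_reps_card]
  have hsub : reps σ.SameCycle ⊆ (univ.erase w1).erase w2 := by
    intro a ha
    rw [Finset.mem_erase, Finset.mem_erase]
    exact ⟨fun h => h2 (h ▸ ha), fun h => h1 (h ▸ ha), Finset.mem_univ a⟩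
  have hcard : ((univ.erase w1).erase w2).card = n - 2 := by
    rw [Finset.card_erase_of_mem (by rw [Finset.mem_erase]; exact ⟨h12.symm, Finset.mem_univ _⟩),
        Finset.card_erase_of_mem (Finset.mem_univ _)]
    simp only [Finset.card_univ, Fintype.card_fin]
    omega
  have hfin : 2 ≤ n := by
    have : ({w1, w2} : Finset (Fin n)).card ≤ n := by
      simpa using Finset.card_le_univ {w1, w2}
    rwa [Finset.card_insert_of_notMem (by simp [h12]), Finset.card_singleton] at this
  have := Finset.card_le_card hsub
  omega

lemma hr2_of_triple {σ : Equiv.Perm (Fin n)} {k b c : Fin n}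
    (hkb : k ≠ b) (hkc : k ≠ c) (hbc : b ≠ c)
    (h1 : σ.SameCycle k b) (h2 : σ.SameCycle k c) : numCycles σ + 2 ≤ n := by
  by_cases hk : k ∈ reps σ.SameCycle
  · have hb : b ∉ reps σ.SameCycle := fun hb =>
      hkb (reps_eq_of_rel hk hb (fun _ _ h => h.symm) h1)
    have hc : c ∉ reps σ.SameCycle := fun hc' =>
      hkc (reps_eq_of_rel hk hc' (fun _ _ h => h.symm) h2)
    exact numCycles_add_two_le hbc hb hc
  · by_cases hb : b ∈ reps σ.SameCycle
    · have hc : c ∉ reps σ.SameCycle := fun hc' =>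
        hbc (reps_eq_of_rel hb hc' (fun _ _ h => h.symm) (h1.symm.trans h2))
      exact numCycles_add_two_le hkc hk hc
    · exact numCycles_add_two_le hkb hk hb

lemma pqSpecial {p q : ℕ} (hp : 1 ≤ p) (hq : 1 ≤ q) {π σ : Equiv.Perm (Fin (p+q))}
    (hprod : σ * π = gammaPQ p q) (hsum : numCycles π + numCycles σ = p + q)
    (hall : ∀ k, ∃ m, π.SameCycle k m ∧ ¬ (gammaPQ p q).SameCycle k m)
    (hr2 : numCycles σ + 2 ≤ p + q) {x : Fin (p+q)} (hx : σ x ≠ x) :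
    ¬ π.SameCycle (σ⁻¹ x) x := by
  intro hsc
  have hinv : σ⁻¹ x ≠ x := by
    intro h
    have := congrArg σ h
    rw [show σ (σ⁻¹ x) = x from σ.apply_symm_apply x] at this
    exact hx this.symm
  have hxsx : x ≠ σ x := fun h => hx h.symm
  set t' := Equiv.swap (σ⁻¹ x) x with ht'def
  set t := Equiv.swap x (σ x) with htdef
  set π'' := t' * π with hπ''
  set σ'' := t * σ with hσ''
  have hsplitπ : numCycles π'' = numCycles π + 1 :=
    numCycles_swap_mul_of_sameCycle hinv hsc
  have hsplitσ : numCycles σ'' = numCycles σ + 1 :=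
    numCycles_swap_mul_of_sameCycle hxsx ⟨1, by simp⟩
  have ht'conj : t' = σ⁻¹ * t * σ := by
    have h2 := Equiv.swap_apply_apply σ⁻¹ x (σ x)
    rw [show σ⁻¹ (σ x) = x from σ.symm_apply_apply x, inv_inv] at h2
    rw [ht'def, htdef, h2]
  have hprod'' : σ'' * π'' = gammaPQ p q := by
    rw [hσ'', hπ'', ht'conj, ← hprod]
    simp only [mul_assoc]
    rw [mul_inv_cancel_left]
    rw [show t * (t * (σ * π)) = (t * t) * (σ * π) from (mul_assoc _ _ _).symm,
      htdef, Equiv.swap_mul_self, one_mul]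
  -- find a through cycle of π''
  have hπ2 : 2 ≤ numCycles π := by omega
  have hrepsπ : 1 < (reps π.SameCycle).card := by
    rw [numCycles_eq_reps_card] at hπ2
    omega
  obtain ⟨e1, he1, e2, he2, hne⟩ := Finset.one_lt_card.1 hrepsπ
  have hother : ∃ e, ¬ π.SameCycle e (σ⁻¹ x) := by
    by_contra hc
    push_neg at hc
    exact hne (reps_eq_of_rel he1 he2 (fun _ _ h => h.symm)
      ((hc e1).trans (hc e2).symm))
  obtain ⟨e, he⟩ := hother
  have hex : ¬ π.SameCycle e x := fun h => he (h.trans hsc.symm)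
  obtain ⟨m, hm1, hm2⟩ := hall e
  have hnsplit : ¬ π''.SameCycle (σ⁻¹ x) x := by
    rw [hπ'', ht'def]
    exact swap_mul_not_sameCycle_split hinv hsc
  have hπback : π = t' * π'' := by
    rw [hπ'', ← mul_assoc, ht'def, Equiv.swap_mul_self, one_mul]
  have hiff : ∀ a b, π.SameCycle a b ↔
      mergeRel π''.SameCycle (σ⁻¹ x) x a b := by
    intro a b
    conv_lhs => rw [hπback, ht'def]
    exact swap_mul_sameCycle_merge hinv hnsplit a b
  have hem : π''.SameCycle e m := by
    rcases (hiff e m).1 hm1 with h | ⟨h1, h2⟩ | ⟨h1, h2⟩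
    · exact h
    · exact absurd ((hiff e (σ⁻¹ x)).2 (Or.inl h1)) he
    · exact absurd ((hiff e x).2 (Or.inl h1)) hex
  have hthrough'' : ∃ i j, π''.SameCycle i j ∧ ¬ (gammaPQ p q).SameCycle i j :=
    ⟨e, m, hem, hm2⟩
  have hσ''eq : σ'' = gammaPQ p q * π''⁻¹ := by
    rw [← hprod'', mul_assoc]
    simp
  have := star_through hp hq π'' hthrough''
  rw [← hσ''eq] at this
  omega

lemma moveLemma {p q : ℕ} (hp : 1 ≤ p) (hq : 1 ≤ q) {π σ : Equiv.Perm (Fin (p+q))}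
    (hprod : σ * π = gammaPQ p q) (hsum : numCycles π + numCycles σ = p + q)
    (hall : ∀ k, ∃ m, π.SameCycle k m ∧ ¬ (gammaPQ p q).SameCycle k m)
    (hr2 : numCycles σ + 2 ≤ p + q) {x : Fin (p+q)} (hx : σ x ≠ x) :
    (Equiv.swap x (σ x) * σ) * ((Equiv.swap x (σ x) * σ)⁻¹ * gammaPQ p q) = gammaPQ p q ∧
    numCycles ((Equiv.swap x (σ x) * σ)⁻¹ * gammaPQ p q)
      + numCycles (Equiv.swap x (σ x) * σ) = p + q ∧
    (∀ k, ∃ m, ((Equiv.swap x (σ x) * σ)⁻¹ * gammaPQ p q).SameCycle k m ∧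
      ¬ (gammaPQ p q).SameCycle k m) ∧
    numCycles (Equiv.swap x (σ x) * σ) = numCycles σ + 1 := by
  have hxsx : x ≠ σ x := fun h => hx h.symm
  have hinv : σ⁻¹ x ≠ x := by
    intro h
    have := congrArg σ h
    rw [show σ (σ⁻¹ x) = x from σ.apply_symm_apply x] at this
    exact hx this.symm
  set t := Equiv.swap x (σ x) with htdef
  set t' := Equiv.swap (σ⁻¹ x) x with ht'def
  set σ' := t * σ with hσ'
  set π' := σ'⁻¹ * gammaPQ p q with hπ'
  have hprod' : σ' * π' = gammaPQ p q := by
    rw [hπ', ← mul_assoc]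
    simp
  have ht'conj : t' = σ⁻¹ * t * σ := by
    have h2 := Equiv.swap_apply_apply σ⁻¹ x (σ x)
    rw [show σ⁻¹ (σ x) = x from σ.symm_apply_apply x, inv_inv] at h2
    rw [ht'def, htdef, h2]
  have hπ'eq : π' = t' * π := by
    rw [hπ', ← hprod, hσ', ht'conj]
    rw [mul_inv_rev, htdef, Equiv.swap_inv]
    simp only [mul_assoc]
  have hmerge : ¬ π.SameCycle (σ⁻¹ x) x :=
    pqSpecial hp hq hprod hsum hall hr2 hx
  have hπ'count : numCycles π' + 1 = numCycles π := by
    rw [hπ'eq, ht'def]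
    exact numCycles_swap_mul_of_not_sameCycle hinv hmerge
  have hσ'count : numCycles σ' = numCycles σ + 1 :=
    numCycles_swap_mul_of_sameCycle hxsx ⟨1, by simp⟩
  refine ⟨hprod', by omega, ?_, hσ'count⟩
  intro k
  obtain ⟨m, hm1, hm2⟩ := hall k
  refine ⟨m, ?_, hm2⟩
  rw [hπ'eq, ht'def]
  exact (swap_mul_sameCycle_merge hinv hmerge k m).2 (Or.inl hm1)

end MainInduction

section Main
open Equiv.Perm

lemma mainInduction {p q : ℕ} (hp : 1 ≤ p) (hq : 1 ≤ q) :
    ∀ (r : ℕ) (π σ : Equiv.Perm (Fin (p+q))),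
      σ * π = gammaPQ p q → numCycles π + numCycles σ = p + q →
      (∀ k, ∃ m, π.SameCycle k m ∧ ¬ (gammaPQ p q).SameCycle k m) →
      (p + q) - numCycles σ ≤ r →
      (∀ k, cycleLen σ k ≤ 2) ∧
      (∀ u, σ u ≠ u → σ (σ u) = u → ¬ (gammaPQ p q).SameCycle u (σ u)) := by
  intro r
  induction r with
  | zero =>
    intro π σ hprod hsum hall hr
    exfalso
    have h1 : numCycles σ = p + q := le_antisymm (numCycles_le σ) (by omega)
    have h2 : σ = 1 := eq_one_of_numCycles_eq σ h1
    rw [h2, one_mul] at hprod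
    subst hprod
    obtain ⟨m, hm1, hm2⟩ := hall ⟨0, by omega⟩
    exact hm2 hm1
  | succ r ih =>
    intro π σ hprod hsum hall hr
    constructor
    · -- cycleLen ≤ 2
      intro k
      by_contra hk
      push_neg at hk
      have hfixk : σ k ≠ k := by
        intro h
        rw [cycleLen_eq_one_of_fixed h] at hk
        omega
      have hkb : k ≠ σ k := fun h => hfixk h.symm
      have hsq : σ (σ k) ≠ k := by
        intro h
        have := cycleLen_le_two_of_sq h
        omega
      have hbc : σ k ≠ σ (σ k) := fun h => hfixk (σ.injective h).symm
      have hkc : k ≠ σ (σ k) := fun h => hsq h.symm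
      have hrel1 : σ.SameCycle k (σ k) := ⟨1, by simp⟩
      have hrel2 : σ.SameCycle k (σ (σ k)) := hrel1.trans ⟨1, by simp⟩
      have hr2 : numCycles σ + 2 ≤ p + q := hr2_of_triple hkb hkc hbc hrel1 hrel2
      obtain ⟨hprod', hsum', hall', hσ'c⟩ := moveLemma hp hq hprod hsum hall hr2 hfixk
      have hr' : (p + q) - numCycles (Equiv.swap k (σ k) * σ) ≤ r := by omega
      obtain ⟨C1', C2'⟩ := ih _ _ hprod' hsum' hall' hr'
      have hv1 : (Equiv.swap k (σ k) * σ) (σ k) = σ (σ k) := by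
        rw [Equiv.Perm.mul_apply, Equiv.swap_apply_of_ne_of_ne (fun h => hsq h) hbc.symm]
      by_cases hd : σ (σ (σ k)) = k
      · -- three-cycle of σ : contradiction via three pairwise non-gamma-related points
        have hv2 : (Equiv.swap k (σ k) * σ) (σ (σ k)) = σ k := by
          rw [Equiv.Perm.mul_apply, hd, Equiv.swap_apply_left]
        have pair1 := C2' (σ k) (by rw [hv1]; exact hbc.symm)
          (by rw [hv1, hv2])
        rw [hv1] at pair1
        -- move at σ k
        have hxb : σ (σ k) ≠ σ k := hbc.symm
        obtain ⟨hprod2, hsum2, hall2, hσ2c⟩ := moveLemma hp hq hprod hsum hall hr2 hxb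
        have hr2' : (p + q) - numCycles (Equiv.swap (σ k) (σ (σ k)) * σ) ≤ r := by omega
        obtain ⟨C1₂, C2₂⟩ := ih _ _ hprod2 hsum2 hall2 hr2'
        have hw1 : (Equiv.swap (σ k) (σ (σ k)) * σ) k = σ (σ k) := by
          rw [Equiv.Perm.mul_apply, Equiv.swap_apply_left]
        have hw2 : (Equiv.swap (σ k) (σ (σ k)) * σ) (σ (σ k)) = k := by
          rw [Equiv.Perm.mul_apply, hd,
            Equiv.swap_apply_of_ne_of_ne hkb hkc]
        have pair2 := C2₂ k (by rw [hw1]; exact fun h => hkc h.symm)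
          (by rw [hw1, hw2])
        rw [hw1] at pair2
        -- move at σ (σ k)
        have hxc : σ (σ (σ k)) ≠ σ (σ k) := by rw [hd]; exact hkc
        obtain ⟨hprod3, hsum3, hall3, hσ3c⟩ := moveLemma hp hq hprod hsum hall hr2 hxc
        have hr3' : (p + q) - numCycles (Equiv.swap (σ (σ k)) (σ (σ (σ k))) * σ) ≤ r := by
          omega
        obtain ⟨C1₃, C2₃⟩ := ih _ _ hprod3 hsum3 hall3 hr3'
        have hz1 : (Equiv.swap (σ (σ k)) (σ (σ (σ k))) * σ) k = σ k := by
          rw [Equiv.Perm.mul_apply, hd, Equiv.swap_apply_of_ne_of_ne hbc hfixk]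
        have hz2 : (Equiv.swap (σ (σ k)) (σ (σ (σ k))) * σ) (σ k) = k := by
          rw [Equiv.Perm.mul_apply, hd, Equiv.swap_apply_left]
        have pair3 := C2₃ k (by rw [hz1]; exact hfixk) (by rw [hz1, hz2])
        rw [hz1] at pair3
        rw [gamma_sameCycle] at pair1 pair2 pair3
        tauto
      · -- σ-cycle of k has length ≥ 4 : contradiction with C1'
        have hdc : σ (σ (σ k)) ≠ σ (σ k) := fun h => hbc (σ.injective h).symm
        have hdb : σ (σ (σ k)) ≠ σ k := fun h => hkc (σ.injective h).symm
        have hv2 : (Equiv.swap k (σ k) * σ) (σ (σ k)) = σ (σ (σ k)) := by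
          rw [Equiv.Perm.mul_apply, Equiv.swap_apply_of_ne_of_ne hd hdb]
        have hs1 : (Equiv.swap k (σ k) * σ).SameCycle (σ k) (σ (σ k)) :=
          hv1 ▸ ⟨1, by simp⟩
        have hs2 : (Equiv.swap k (σ k) * σ).SameCycle (σ k) (σ (σ (σ k))) :=
          hs1.trans (hv2 ▸ ⟨1, by simp⟩)
        have h3 := three_le_cycleLen hbc hdb.symm hdc.symm hs1 hs2
        have := C1' (σ k)
        omega
    · -- pairs of σ are through pairs
      intro u hu hsqu
      intro hγ
      have hu2 : u ≠ σ u := fun h => hu h.symm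
      by_cases hex : ∃ x, σ x ≠ x ∧ x ≠ u ∧ x ≠ σ u
      · obtain ⟨x, hx, hxu, hxsu⟩ := hex
        -- disjointness facts
        have hsxu : σ x ≠ u := by
          intro h
          exact hxsu (σ.injective (by rw [hsqu, h]) : x = σ u)
        have hsxsu : σ x ≠ σ u := fun h => hxu (σ.injective h)
        have hxsx : x ≠ σ x := fun h => hx h.symm
        -- hr2 from two disjoint pairs
        obtain ⟨w1, hw1mem, hw1⟩ := exists_nonrep_pair (σ := σ) hu2 ⟨1, by simp⟩
        obtain ⟨w2, hw2mem, hw2⟩ := exists_nonrep_pair (σ := σ) hxsx ⟨1, by simp⟩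
        have hw12 : w1 ≠ w2 := by
          rcases hw1mem with rfl | rfl <;> rcases hw2mem with rfl | rfl
          · exact fun h => hxu h.symm
          · exact fun h => hsxu h.symm
          · exact fun h => hxsu h.symm
          · exact fun h => hsxsu h.symm
        have hr2 : numCycles σ + 2 ≤ p + q := numCycles_add_two_le hw12 hw1 hw2
        obtain ⟨hprod', hsum', hall', hσ'c⟩ := moveLemma hp hq hprod hsum hall hr2 hx
        have hr' : (p + q) - numCycles (Equiv.swap x (σ x) * σ) ≤ r := by omega
        obtain ⟨C1', C2'⟩ := ih _ _ hprod' hsum' hall' hr'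
        have hσ'u : (Equiv.swap x (σ x) * σ) u = σ u := by
          rw [Equiv.Perm.mul_apply,
            Equiv.swap_apply_of_ne_of_ne (fun h => hxsu h.symm) (fun h => hxu (σ.injective h).symm)]
        have hσ'su : (Equiv.swap x (σ x) * σ) (σ u) = u := by
          rw [Equiv.Perm.mul_apply, hsqu,
            Equiv.swap_apply_of_ne_of_ne (fun h => hxu h.symm) (fun h => hsxu h.symm)]
        have hpair := C2' u (by rw [hσ'u]; exact hu) (by rw [hσ'u, hσ'su])
        rw [hσ'u] at hpair
        exact hpair hγ
      · push_neg at hex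
        have hσeq : σ = Equiv.swap u (σ u) := by
          ext z
          by_cases hz1 : z = u
          · subst hz1
            rw [Equiv.swap_apply_left]
          · by_cases hz2 : z = σ u
            · subst hz2
              rw [Equiv.swap_apply_right, hsqu]
            · rw [Equiv.swap_apply_of_ne_of_ne hz1 hz2]
              by_contra hzz
              have hzz' : σ z ≠ z := fun h => hzz (by rw [h])
              exact hz2 (hex z hzz' hz1)
        have hσcount : numCycles σ + 1 = p + q := by
          have h1 : ¬ (1 : Equiv.Perm (Fin (p+q))).SameCycle u (σ u) := by
            rw [Equiv.Perm.sameCycle_one]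
            exact hu2
          have := numCycles_swap_mul_of_not_sameCycle hu2 h1
          rw [mul_one, numCycles_one] at this
          rw [hσeq]
          exact this
        have hπeq : π = Equiv.swap u (σ u) * gammaPQ p q := by
          have h1 : π = σ⁻¹ * (σ * π) := by rw [← mul_assoc]; simp
          rw [hprod] at h1
          have h2 : σ⁻¹ = Equiv.swap u (σ u) := by
            conv_lhs => rw [hσeq]
            rw [Equiv.swap_inv]
          rw [h1, h2]
        have hπcount : numCycles π = 3 := by
          have := numCycles_swap_mul_of_sameCycle hu2 hγ
          rw [← hπeq] at this
          rw [this, numCycles_gamma hp hq]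
        omega

end Main

section Parity
open Equiv.Perm

lemma gamma_val_lt {p q : ℕ} {u : Fin (p+q)} (h : (u:ℕ) < p) :
    ((gammaPQ p q) u : ℕ) = if (u:ℕ) + 1 = p then 0 else (u:ℕ) + 1 := by
  obtain ⟨p', rfl⟩ : ∃ p', p = p' + 1 := ⟨p - 1, by omega⟩
  unfold gammaPQ
  rw [Equiv.permCongr_apply, finSum_symm_lt h]
  simp only [Equiv.sumCongr_apply, Sum.map_inl, finSumFinEquiv_apply_left, finRotate_succ_apply,
    Fin.coe_castAdd]
  rw [Fin.val_add_one]
  split_ifs with h1 h2 h2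
  · rfl
  · exfalso
    apply h2
    have := Fin.ext_iff.1 h1
    simp [Fin.val_last] at this
    omega
  · exfalso
    apply h1
    ext
    simp [Fin.val_last]
    omega
  · rfl

lemma gamma_val_ge {p q : ℕ} {u : Fin (p+q)} (h : p ≤ (u:ℕ)) :
    ((gammaPQ p q) u : ℕ) = if (u:ℕ) + 1 = p + q then p else (u:ℕ) + 1 := by
  have hult := u.isLt
  have hq1 : 1 ≤ q := by omega
  obtain ⟨q', rfl⟩ : ∃ q', q = q' + 1 := ⟨q - 1, by omega⟩
  unfold gammaPQ
  rw [Equiv.permCongr_apply, finSum_symm_ge h]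
  rw [show (Equiv.sumCongr (finRotate p) (finRotate (q'+1)))
        (Sum.inr (⟨u.val - p, by omega⟩ : Fin (q'+1)))
      = Sum.inr ((finRotate (q'+1)) (⟨u.val - p, by omega⟩ : Fin (q'+1))) from rfl]
  rw [finSumFinEquiv_apply_right]
  rw [show ((Fin.natAdd p ((finRotate (q'+1)) (⟨u.val - p, by omega⟩ : Fin (q'+1)))) : ℕ)
      = p + (((finRotate (q'+1)) (⟨u.val - p, by omega⟩ : Fin (q'+1))) : ℕ) from rfl]
  rw [finRotate_succ_apply, Fin.val_add_one]
  split_ifs with h1 h2 h2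
  · omega
  · exfalso
    apply h2
    have := Fin.ext_iff.1 h1
    simp only [Fin.val_last, Fin.val_mk] at this
    omega
  · exfalso
    apply h1
    ext
    simp only [Fin.val_last, Fin.val_mk]
    omega
  · simp only [Fin.val_mk]
    omega

lemma gamma_flips {p q : ℕ} (hp : Even p) (hq : Even q) (u : Fin (p+q)) :
    ¬ SameParity u ((gammaPQ p q) u) := by
  intro hsp
  unfold SameParity at hsp
  rw [Nat.odd_iff, Nat.odd_iff] at hsp
  have hp2 := Nat.even_iff.1 hp
  have hq2 := Nat.even_iff.1 hq
  have hult := u.isLt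
  have hv : ((gammaPQ p q) u : ℕ) % 2 ≠ (u:ℕ) % 2 := by
    by_cases h : (u:ℕ) < p
    · have hv := gamma_val_lt (q := q) h
      by_cases h2 : (u:ℕ) + 1 = p
      · rw [if_pos h2] at hv; omega
      · rw [if_neg h2] at hv; omega
    · have hv := gamma_val_ge (p := p) (q := q) (u := u) (by omega)
      by_cases h2 : (u:ℕ) + 1 = p + q
      · rw [if_pos h2] at hv; omega
      · rw [if_neg h2] at hv; omega
  by_cases ho : ((u:ℕ) + 1) % 2 = 1
  · have := hsp.1 ho
    omega
  · have h2 : ¬ (((gammaPQ p q) u : ℕ) + 1) % 2 = 1 := fun hh => ho (hsp.2 hh)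
    omega

lemma sum_alt (m : ℕ) :
    (∑ i ∈ Finset.range m, (if Even i then (1:ℤ) else -1)) = if Even m then 0 else 1 := by
  induction m with
  | zero => simp
  | succ m ih =>
    rw [Finset.sum_range_succ, ih]
    by_cases h : Even m
    · simp [h, Nat.even_add_one]
    · simp [h, Nat.even_add_one]

lemma pq_even {p q : ℕ} (hp : 1 ≤ p) (hq : 1 ≤ q) (π : Equiv.Perm (Fin (p+q)))
    (hpar : ∀ k, (¬ (gammaPQ p q).SameCycle k (π k) → SameParity k (π k)) ∧
            ((gammaPQ p q).SameCycle k (π k) → ¬ SameParity k (π k))) :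
    Even p ∧ Even q := by
  set f : Fin (p+q) → ℤ :=
    fun k => (if Even (k:ℕ) then 1 else -1) * (if (k:ℕ) < p then 1 else -1) with hf
  have hpar' : ∀ k : Fin (p+q), (Even (k:ℕ) ↔ Even ((π k : Fin (p+q)) : ℕ)) ↔
      ¬ ((k:ℕ) < p ↔ ((π k : Fin (p+q)) : ℕ) < p) := by
    intro k
    have h1 := hpar k
    rw [show SameParity k (π k) ↔ (Even (k:ℕ) ↔ Even ((π k : Fin (p+q)) : ℕ)) from ?_] at h1
    · rw [show (gammaPQ p q).SameCycle k (π k) ↔ ((k:ℕ) < p ↔ ((π k : Fin (p+q)) : ℕ) < p)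
        from gamma_sameCycle p q k (π k)] at h1
      tauto
    · unfold SameParity
      simp only [Nat.odd_add_one, Nat.not_odd_iff_even]
  have hflip : ∀ k, f (π k) = - f k := by
    intro k
    have h := hpar' k
    rw [hf]
    by_cases h1 : Even (k:ℕ) <;> by_cases h2 : Even ((π k : Fin (p+q)) : ℕ) <;>
      by_cases h3 : (k:ℕ) < p <;> by_cases h4 : ((π k : Fin (p+q)) : ℕ) < p <;>
      simp only [h1, h2, h3, h4, if_true, if_false] <;>
      norm_num <;> tauto
  have hsum1 : (∑ k, f (π k)) = ∑ k, f k := Equiv.sum_comp π f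
  have hsum2 : (∑ k, f (π k)) = - ∑ k, f k := by
    rw [show (∑ k, f (π k)) = ∑ k, - f k from Finset.sum_congr rfl fun k _ => hflip k]
    rw [Finset.sum_neg_distrib]
  have hzero : (∑ k, f k) = 0 := by omega
  -- now compute the sum explicitly
  have hcompute : (∑ k, f k) =
      (if Even p then 0 else 1) + (if Even p then (-1) else 1) * (if Even q then 0 else 1) := by
    have h1 : (∑ k, f k) = ∑ i ∈ Finset.range (p+q),
        ((if Even i then (1:ℤ) else -1) * (if i < p then 1 else -1)) := by
      rw [← Fin.sum_univ_eq_sum_range]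
    rw [h1]
    rw [Finset.range_eq_Ico, ← Finset.sum_Ico_consecutive _ (Nat.zero_le p) (Nat.le_add_right p q)]
    have h2 : (∑ i ∈ Finset.Ico 0 p,
        ((if Even i then (1:ℤ) else -1) * (if i < p then 1 else -1))) = if Even p then 0 else 1 := by
      rw [← Finset.range_eq_Ico, ← sum_alt p]
      apply Finset.sum_congr rfl
      intro i hi
      rw [Finset.mem_range] at hi
      rw [if_pos hi]
      ring
    have h3 : (∑ i ∈ Finset.Ico p (p+q),
        ((if Even i then (1:ℤ) else -1) * (if i < p then 1 else -1)))
        = (if Even p then (-1) else 1) * (if Even q then 0 else 1) := by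
      rw [Finset.sum_Ico_eq_sum_range]
      simp only [Nat.add_sub_cancel_left]
      by_cases hep : Even p
      · have hcong : ∀ j ∈ Finset.range q,
            ((if Even (p + j) then (1:ℤ) else -1) * (if p + j < p then 1 else -1))
            = - (if Even j then (1:ℤ) else -1) := by
          intro j _
          have hpj : Even (p + j) ↔ Even j := by
            rw [Nat.even_add]; tauto
          rw [if_neg (show ¬ p + j < p by omega)]
          by_cases hj : Even j
          · rw [if_pos (hpj.2 hj), if_pos hj]; ring
          · rw [if_neg (fun hh => hj (hpj.1 hh)), if_neg hj]; ring
        rw [Finset.sum_congr rfl hcong, Finset.sum_neg_distrib, sum_alt q]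
        by_cases heq : Even q <;> simp [hep, heq]
      · have hcong : ∀ j ∈ Finset.range q,
            ((if Even (p + j) then (1:ℤ) else -1) * (if p + j < p then 1 else -1))
            = (if Even j then (1:ℤ) else -1) := by
          intro j _
          have hpj : Even (p + j) ↔ ¬ Even j := by
            rw [Nat.even_add]; tauto
          rw [if_neg (show ¬ p + j < p by omega)]
          by_cases hj : Even j
          · rw [if_neg (fun hh => (hpj.1 hh) hj), if_pos hj]; ring
          · rw [if_pos (hpj.2 hj), if_neg hj]; ring
        rw [Finset.sum_congr rfl hcong, sum_alt q]
        by_cases heq : Even q <;> simp [hep, heq]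
    rw [h2, h3]
  rw [hcompute] at hzero
  by_cases hep : Even p <;> by_cases heq : Even q <;> simp [hep, heq] at hzero ⊢ <;> tauto

end Parity

section FinalHelpers
open Equiv.Perm

lemma mem_pair_of_sq {n : ℕ} {σ : Equiv.Perm (Fin n)} {a b : Fin n}
    (hsq : σ (σ a) = a) (h : σ.SameCycle a b) : b = a ∨ b = σ a := by
  obtain ⟨i, -, rfl⟩ := h.exists_pow_eq'
  clear h
  induction i with
  | zero => left; simp
  | succ i ih =>
    rw [pow_succ', Equiv.Perm.mul_apply]
    rcases ih with h1 | h1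
    · right; rw [h1]
    · left; rw [h1, hsq]

end FinalHelpers

theorem stmt11 {p q : ℕ} (π : Equiv.Perm (Fin (p + q))) (hπ : IsSNC p q π)
    (hall : ∀ k, ∃ m, π.SameCycle k m ∧ ¬ (gammaPQ p q).SameCycle k m) :
    (∀ k, cycleLen (gammaPQ p q * π⁻¹) k ≤ 2) ∧
    (∀ k, cycleLen (gammaPQ p q * π⁻¹) k = 2 →
        ∃ m, (gammaPQ p q * π⁻¹).SameCycle k m ∧ ¬ (gammaPQ p q).SameCycle k m) ∧
    ((∀ k, (¬ (gammaPQ p q).SameCycle k (π k) → SameParity k (π k)) ∧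
            ((gammaPQ p q).SameCycle k (π k) → ¬ SameParity k (π k))) →
      Separates (gammaPQ p q * π⁻¹) (oddSet (p + q))) := by
  obtain ⟨hthrough, hsum⟩ := hπ
  rcases Nat.eq_zero_or_pos p with hp0 | hp
  · exfalso
    obtain ⟨i, j, hij, hγ⟩ := hthrough
    subst hp0
    exact hγ ((gamma_sameCycle 0 q i j).2
      (iff_of_false (Nat.not_lt_zero _) (Nat.not_lt_zero _)))
  rcases Nat.eq_zero_or_pos q with hq0 | hq
  · exfalso
    obtain ⟨i, j, hij, hγ⟩ := hthrough
    subst hq0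
    have hi := i.isLt
    have hj := j.isLt
    exact hγ ((gamma_sameCycle p 0 i j).2 (iff_of_true (by omega) (by omega)))
  set σ := gammaPQ p q * π⁻¹ with hσ
  have hprod : σ * π = gammaPQ p q := by rw [hσ, mul_assoc]; simp
  obtain ⟨hC1, hC2⟩ := mainInduction hp hq (p+q) π σ hprod hsum hall (by omega)
  refine ⟨hC1, ?_, ?_⟩
  · intro k hk
    have hfix : σ k ≠ k := by
      intro h; rw [cycleLen_eq_one_of_fixed h] at hk; omega
    have hkb : k ≠ σ k := fun h => hfix h.symm
    have hsq : σ (σ k) = k := orbit_eq_pair hkb rfl (by omega)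
    exact ⟨σ k, ⟨1, by simp⟩, hC2 k hfix hsq⟩
  · intro hpar
    obtain ⟨hep, heq2⟩ := pq_even hp hq π hpar
    intro a ha b hb hsc
    by_contra hab
    have hfix : σ a ≠ a := fun h => hab (hsc.eq_of_left h)
    have hkb : a ≠ σ a := fun h => hfix h.symm
    have hsq : σ (σ a) = a := orbit_eq_pair hkb rfl (hC1 a)
    have hb' : b = σ a := by
      rcases mem_pair_of_sq hsq hsc with h | h
      · exact absurd h.symm hab
      · exact h
    have hthr : ¬ (gammaPQ p q).SameCycle a (σ a) := hC2 a hfix hsq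
    have hπk : π (π⁻¹ a) = a := by simp
    have hγk : (gammaPQ p q) (π⁻¹ a) = σ a := by rw [hσ]; rfl
    by_cases hcase : (gammaPQ p q).SameCycle (π⁻¹ a) a
    · exact hthr (hcase.symm.trans (hγk ▸ ⟨1, by simp⟩))
    · have hsp : SameParity (π⁻¹ a) a := by
        have h1 := (hpar (π⁻¹ a)).1
        rw [hπk] at h1
        exact h1 hcase
      have hnsp : ¬ SameParity (π⁻¹ a) (σ a) := by
        have h2 := gamma_flips hep heq2 (π⁻¹ a)
        rwa [hγk] at h2
      have haodd : Odd ((a:ℕ) + 1) := by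
        have := ha
        unfold oddSet at this
        simpa using this
      have hbodd : Odd (((σ a : Fin (p+q)):ℕ) + 1) := by
        rw [← hb']
        have := hb
        unfold oddSet at this
        simpa using this
      unfold SameParity at hsp hnsp
      tauto
end

section
/- If σ ∈ S_{kp+kq} is k-alternating and k-equal with respect to γ = γ_{kp,kq}, then σ^k is the identity permutation, and for the set K = {k, 2k, …, (p+q)k} one has σ(γ^i(K)) = γ^{i+1}(K) for 1 ≤ i ≤ k and γ⁻¹σ^{−r}γ(K) ∩ K = ∅ for 1 ≤ r < k. -/
open Equiv Finset
open scoped Classical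

def KAlternating {n : ℕ} (k : ℕ) (σ : Equiv.Perm (Fin n)) : Prop :=
  ∀ i : Fin n, ((σ i).val) % k = (i.val + 1) % k

def KEqual {n : ℕ} (k : ℕ) (σ : Equiv.Perm (Fin n)) : Prop :=
  ∀ i : Fin n, cycleLen σ i = k

def multSet (n k : ℕ) : Finset (Fin n) := univ.filter fun i => (i.val + 1) % k = 0

section aux

open Equiv Finset

/-- residue class `c` modulo `k` (shifted by one, to match `multSet`). -/
private def resC (n k c : ℕ) : Finset (Fin n) :=
  Finset.univ.filter fun v => (v.val + 1) % k = c % k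

private lemma multSet_eq_resC (n k : ℕ) : multSet n k = resC n k 0 := by
  ext v; rw [multSet, resC, Finset.mem_filter, Finset.mem_filter]; simp

private lemma finRotate_val_mod {n k : ℕ} (hn : 0 < n) (hk : k ∣ n) (a : Fin n) :
    ((finRotate n) a).val % k = (a.val + 1) % k := by
  obtain ⟨m, rfl⟩ := Nat.exists_eq_succ_of_ne_zero hn.ne'
  rw [finRotate_succ_apply]
  have h : ((a + 1 : Fin (m + 1)).val) = (a.val + 1) % (m + 1) := by
    simp [Fin.add_def]
  rw [h, Nat.mod_mod_of_dvd _ hk]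

private lemma gamma_mod {k p q : ℕ} (hk : 0 < k) (hp : 0 < p) (hq : 0 < q)
    (x : Fin (k * p + k * q)) :
    ((gammaPQ (k * p) (k * q)) x).val % k = (x.val + 1) % k := by
  obtain ⟨y, rfl⟩ := finSumFinEquiv.surjective x
  have hγ : ∀ z, (gammaPQ (k * p) (k * q)) (finSumFinEquiv z) =
      finSumFinEquiv (Equiv.sumCongr (finRotate (k * p)) (finRotate (k * q)) z) := by
    intro z
    simp [gammaPQ, Equiv.permCongr_apply]
  cases y with
  | inl a =>
      rw [hγ]
      simp only [Equiv.sumCongr_apply, Sum.map_inl, finSumFinEquiv_apply_left,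
        Fin.coe_castAdd]
      exact finRotate_val_mod (Nat.mul_pos hk hp) ⟨p, rfl⟩ a
  | inr b =>
      rw [hγ]
      simp only [Equiv.sumCongr_apply, Sum.map_inr, finSumFinEquiv_apply_right,
        Fin.coe_natAdd]
      rw [Nat.mul_add_mod, Nat.add_assoc, Nat.mul_add_mod]
      exact finRotate_val_mod (Nat.mul_pos hk hq) ⟨q, rfl⟩ b

private lemma image_resC {n k c : ℕ} (τ : Equiv.Perm (Fin n))
    (hτ : ∀ x, (τ x).val % k = (x.val + 1) % k) :
    (resC n k c).image ⇑τ = resC n k (c + 1) := by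
  ext y
  simp only [resC, Finset.mem_image, Finset.mem_filter, Finset.mem_univ, true_and]
  constructor
  · rintro ⟨x, hx, rfl⟩
    have h1 : (τ x).val ≡ x.val + 1 [MOD k] := hτ x
    have h2 : x.val + 1 ≡ c [MOD k] := hx
    exact (h1.trans h2).add_right 1
  · intro hy
    refine ⟨τ⁻¹ y, ?_, τ.apply_symm_apply y⟩
    have h1 : y.val ≡ (τ⁻¹ y).val + 1 [MOD k] := by
      have := hτ (τ⁻¹ y); rw [show τ (τ⁻¹ y) = y from τ.apply_symm_apply y] at this; exact this
    have h2 : y.val ≡ c [MOD k] := Nat.ModEq.add_right_cancel' 1 hy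
    exact (h1.symm.trans h2 : _)

private lemma image_resC_pow {n k c : ℕ} (τ : Equiv.Perm (Fin n))
    (hτ : ∀ x, (τ x).val % k = (x.val + 1) % k) (i : ℕ) :
    (resC n k c).image ⇑(τ ^ i) = resC n k (c + i) := by
  induction i with
  | zero => simp
  | succ i ih =>
      rw [pow_succ', Equiv.Perm.coe_mul, ← Finset.image_image, ih, image_resC τ hτ,
        ← Nat.add_assoc]

private lemma pow_mod {n k : ℕ} (τ : Equiv.Perm (Fin n))
    (hτ : ∀ x, (τ x).val % k = (x.val + 1) % k) (i : ℕ) (x : Fin n) :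
    ((τ ^ i) x).val % k = (x.val + i) % k := by
  induction i with
  | zero => simp
  | succ i ih =>
      rw [pow_succ', Equiv.Perm.mul_apply]
      have h1 : (τ ((τ ^ i) x)).val ≡ ((τ ^ i) x).val + 1 [MOD k] := hτ _
      have h2 : ((τ ^ i) x).val ≡ x.val + i [MOD k] := ih
      calc (τ ((τ ^ i) x)).val % k = (((τ ^ i) x).val + 1) % k := h1
        _ = (x.val + i + 1) % k := h2.add_right 1
        _ = (x.val + (i + 1)) % k := by rw [Nat.add_assoc]

end aux

theorem stmt14 {k p q : ℕ} (hk : 0 < k) (hp : 0 < p) (hq : 0 < q)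
    (σ : Equiv.Perm (Fin (k*p + k*q)))
    (halt : KAlternating k σ) (heq : KEqual k σ) :
    σ ^ k = 1 ∧
    (∀ i : ℕ, 1 ≤ i → i ≤ k →
      ((multSet (k*p + k*q) k).image ⇑((gammaPQ (k*p) (k*q)) ^ i)).image ⇑σ =
        (multSet (k*p + k*q) k).image ⇑((gammaPQ (k*p) (k*q)) ^ (i+1))) ∧
    (∀ r : ℕ, 1 ≤ r → r < k →
      ((multSet (k*p + k*q) k).image
          ⇑((gammaPQ (k*p) (k*q))⁻¹ * (σ ^ r)⁻¹ * gammaPQ (k*p) (k*q))) ∩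
        multSet (k*p + k*q) k = ∅) := by
  classical
  have hγ : ∀ x : Fin (k*p + k*q), ((gammaPQ (k*p) (k*q)) x).val % k = (x.val + 1) % k :=
    gamma_mod hk hp hq
  refine ⟨?_, ?_, ?_⟩
  · -- σ ^ k = 1
    apply Equiv.ext
    intro x
    rw [Equiv.Perm.one_apply]
    by_cases hx : σ x = x
    · exact Equiv.Perm.pow_apply_eq_self_of_apply_eq_self hx k
    · have hxs : x ∈ σ.support := Equiv.Perm.mem_support.2 hx
      have hsupp : (σ.cycleOf x).support = Finset.univ.filter fun m => σ.SameCycle x m := by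
        ext m
        rw [Equiv.Perm.mem_support_cycleOf_iff]
        simp [hxs]
      have hcard : (σ.cycleOf x).support.card = k := by
        rw [hsupp]
        simpa [cycleLen] using heq x
      have hcyc : (σ.cycleOf x).IsCycle := Equiv.Perm.isCycle_cycleOf σ hx
      have horder : orderOf (σ.cycleOf x) = k := by rw [hcyc.orderOf, hcard]
      have h1 : (σ.cycleOf x ^ k) x = (σ ^ k) x := Equiv.Perm.cycleOf_pow_apply_self σ x k
      have h2 : σ.cycleOf x ^ k = 1 := by
        have h3 := pow_orderOf_eq_one (σ.cycleOf x)
        rwa [horder] at h3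
      rw [← h1, h2, Equiv.Perm.one_apply]
  · -- image statement
    intro i _ _
    rw [multSet_eq_resC, image_resC_pow _ hγ, image_resC_pow _ hγ, image_resC σ halt]
    norm_num
  · -- intersection statement
    intro r hr1 hrk
    rw [Finset.eq_empty_iff_forall_notMem]
    intro y hy
    rw [Finset.mem_inter, Finset.mem_image] at hy
    obtain ⟨⟨x, hx, hxy⟩, hyK⟩ := hy
    rw [multSet] at hx hyK
    simp only [Finset.mem_filter, Finset.mem_univ, true_and] at hx hyK
    -- from hxy : γ⁻¹ ((σ^r)⁻¹ (γ x)) = y, so (σ^r) (γ y) = γ x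
    have key : (σ ^ r) ((gammaPQ (k*p) (k*q)) y) = (gammaPQ (k*p) (k*q)) x := by
      have : (gammaPQ (k*p) (k*q)) y = (σ ^ r)⁻¹ ((gammaPQ (k*p) (k*q)) x) := by
        rw [← hxy]; simp [Equiv.Perm.mul_apply]
      rw [this, show ∀ z, (σ ^ r) ((σ ^ r)⁻¹ z) = z from (σ ^ r).apply_symm_apply]
    have hγx : ((gammaPQ (k*p) (k*q)) x).val % k = 0 := by
      rw [hγ x, hx]
    have hγy : ((gammaPQ (k*p) (k*q)) y).val % k = 0 := by
      rw [hγ y, hyK]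
    have hpow : ((σ ^ r) ((gammaPQ (k*p) (k*q)) y)).val % k =
        (((gammaPQ (k*p) (k*q)) y).val + r) % k := pow_mod σ halt r _
    rw [key, hγx] at hpow
    have h2 : (((gammaPQ (k*p) (k*q)) y).val + r) % k = r % k := by
      have hmodeq : ((gammaPQ (k*p) (k*q)) y).val ≡ 0 [MOD k] := by
        simpa [Nat.ModEq] using hγy
      have h := hmodeq.add_right r; rwa [Nat.zero_add] at h
    rw [h2, Nat.mod_eq_of_lt hrk] at hpow
    omega
end
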